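/- arXiv:0905.3346 — 3 statements merged into one kernel-verified Lean document; each statement's English description precedes it below -/
import Mathlib

section
/- The diophantine equation x⁴ + 12x²y² + 29y⁴ = z² has no solution in positive integers x, y, z. -/
lemma pow4_of_coprime {a b c : ℤ} (h : IsCoprime a b) (ha : 0 < a) (hb : 0 < b)
    (heq : a * b = c ^ 4) : ∃ p q : ℤ, 0 < p ∧ 0 < q ∧ a = p ^ 4 ∧ b = q ^ 4 := by
  have h2 : a * b = (c ^ 2) ^ 2 := by rw [heq]; ring
  obtain ⟨a1, ha1⟩ := Int.sq_of_isCoprime h h2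
  obtain ⟨b1, hb1⟩ := Int.sq_of_isCoprime h.symm (by rw [mul_comm]; exact h2)
  have ha1' : a = a1 ^ 2 := by
    rcases ha1 with h' | h'
    · exact h'
    · exfalso; nlinarith [sq_nonneg a1]
  have hb1' : b = b1 ^ 2 := by
    rcases hb1 with h' | h'
    · exact h'
    · exfalso; nlinarith [sq_nonneg b1]
  have ha1n : a1 ≠ 0 := by rintro rfl; simp at ha1'; omega
  have hb1n : b1 ≠ 0 := by rintro rfl; simp at hb1'; omega
  have hco : IsCoprime |a1| |b1| := by
    rw [Int.isCoprime_iff_gcd_eq_one] at h ⊢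
    rw [Int.gcd, Int.natAbs_abs, Int.natAbs_abs]
    have hda : a1.natAbs ∣ a.natAbs :=
      Int.natAbs_dvd_natAbs.mpr (by rw [ha1']; exact dvd_pow_self a1 two_ne_zero)
    have hdb : b1.natAbs ∣ b.natAbs :=
      Int.natAbs_dvd_natAbs.mpr (by rw [hb1']; exact dvd_pow_self b1 two_ne_zero)
    have hd : Int.gcd a1 b1 ∣ Int.gcd a b :=
      Nat.dvd_gcd ((Nat.gcd_dvd_left _ _).trans hda) ((Nat.gcd_dvd_right _ _).trans hdb)
    rw [h] at hd
    exact Nat.eq_one_of_dvd_one hd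
  have h5 : (a1 * b1 - c ^ 2) * (a1 * b1 + c ^ 2) = 0 := by
    have h3 : (a1 * b1) ^ 2 = (c ^ 2) ^ 2 := by rw [← h2, ha1', hb1']; ring
    linear_combination h3
  have hprod : |a1| * |b1| = c ^ 2 := by
    rw [← abs_mul]
    rcases mul_eq_zero.mp h5 with h' | h'
    · have hh : a1 * b1 = c ^ 2 := by linarith
      rw [hh]; exact abs_of_nonneg (sq_nonneg c)
    · have hh : a1 * b1 = -(c ^ 2) := by linarith
      rw [hh, abs_neg]; exact abs_of_nonneg (sq_nonneg c)
  obtain ⟨p, hp⟩ := Int.sq_of_isCoprime hco hprod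
  obtain ⟨q, hq⟩ := Int.sq_of_isCoprime hco.symm (by rw [mul_comm]; exact hprod)
  have hap : 0 < |a1| := abs_pos.mpr ha1n
  have hbp : 0 < |b1| := abs_pos.mpr hb1n
  have hpa : |a1| = p ^ 2 := by
    rcases hp with h' | h'
    · exact h'
    · exfalso; nlinarith [sq_nonneg p]
  have hqb : |b1| = q ^ 2 := by
    rcases hq with h' | h'
    · exact h'
    · exfalso; nlinarith [sq_nonneg q]
  have hpn : p ≠ 0 := by rintro rfl; simp at hpa; omega
  have hqn : q ≠ 0 := by rintro rfl; simp at hqb; omega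
  refine ⟨|p|, |q|, abs_pos.mpr hpn, abs_pos.mpr hqn, ?_, ?_⟩
  · rw [ha1', ← sq_abs a1, hpa, ← sq_abs p]; ring
  · rw [hb1', ← sq_abs b1, hqb, ← sq_abs q]; ring

lemma pow4_inj {u v : ℤ} (hu : 0 < u) (hv : 0 < v) (h : u ^ 4 = v ^ 4) : u = v := by
  rcases lt_trichotomy u v with h' | h' | h'
  · have := pow_lt_pow_left₀ h' hu.le (show (4:ℕ) ≠ 0 by norm_num); omega
  · exact h'
  · have := pow_lt_pow_left₀ h' hv.le (show (4:ℕ) ≠ 0 by norm_num); omega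

lemma zmod8_key1 : ∀ a b c : ZMod 8,
    (2*a+1)^4 + 12*(2*a+1)^2*(2*b+1)^2 + 29*(2*b+1)^4 ≠ c^2 := by decide

lemma zmod8_key2 : ∀ u v k m : ZMod 8, u*v = 7*(2*k+1)^4 → u+v ≠ 2*(4*m+2) := by decide

lemma zmod8_key3 : ∀ s t k u : ZMod 8, (2*s+1)^2+24*k^2 ≠ 4*u^4+7*(2*t+1)^4 := by decide

lemma zmod8_key4 : ∀ s t m k : ZMod 8, (2*s+1)^2+24*k^2 ≠ 28*(2*m+1)^4+(2*t+1)^4 := by decide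

lemma zmod16_key1 : ∀ t C D : ZMod 16,
    29*(2*C)^4+(2*D+1)^4 ≠ -((2*t+1)^2 - 12*(2*C)^2*(2*D+1)^2) := by decide

lemma zmod16_key2 : ∀ t C D : ZMod 16,
    (2*C)^4+29*(2*D+1)^4 ≠ (2*t+1)^2 - 12*(2*C)^2*(2*D+1)^2 := by decide

lemma zmod16_key3 : ∀ t C D : ZMod 16,
    (2*C)^4+29*(2*D+1)^4 ≠ -((2*t+1)^2 - 12*(2*C)^2*(2*D+1)^2) := by decide

lemma descent : ∀ n : ℕ, ∀ x y z : ℤ, 0 < x → 0 < y → 0 < z → y.natAbs ≤ n →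
    x ^ 4 + 12 * x ^ 2 * y ^ 2 + 29 * y ^ 4 ≠ z ^ 2 := by
  intro n
  induction n using Nat.strong_induction_on with
  | _ n IH =>
  intro x y z hx hy hz hyn heq
  rcases eq_or_ne (Int.gcd x y) 1 with hg | hg
  · -- coprime case
    have hco : IsCoprime x y := Int.isCoprime_iff_gcd_eq_one.mpr hg
    set w : ℤ := x ^ 2 + 6 * y ^ 2 with hwdef
    have hw2 : w ^ 2 = z ^ 2 + 7 * y ^ 4 := by
      simp only [hwdef]; linear_combination heq
    have hwpos : 0 < w := by positivity
    have hzw : z < w := by nlinarith [pow_pos hy 4]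
    rcases Int.even_or_odd y with hye | hyo
    · -- y even : descent case
      obtain ⟨Y, hY⟩ := hye
      have hYeq : y = 2 * Y := by omega
      have hYpos : 0 < Y := by omega
      have hxodd : Odd x := by
        rcases Int.even_or_odd x with hxe | hxo
        · exfalso
          have h2x : (2 : ℤ) ∣ x := hxe.two_dvd
          have h2y : (2 : ℤ) ∣ y := ⟨Y, by omega⟩
          have := Int.isUnit_iff.mp (hco.isUnit_of_dvd' h2x h2y)
          omega
        · exact hxo
      obtain ⟨s, hs⟩ := hxodd
      have hxodd : Odd x := ⟨s, hs⟩
      have hwodd : Odd w := ⟨2 * s ^ 2 + 2 * s + 3 * y ^ 2, by rw [hwdef, hs]; ring⟩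
      have hzodd : Odd z := by
        have hz2 : Odd (z ^ 2) := by
          have hzz : z ^ 2 = w ^ 2 - 7 * y ^ 4 := by linarith
          rw [hzz, hYeq]
          obtain ⟨u, hu⟩ := hwodd
          exact ⟨2 * u ^ 2 + 2 * u - 56 * Y ^ 4, by rw [hu]; ring⟩
        rcases Int.even_or_odd z with hze | hzo
        · exact absurd hz2 (Int.not_odd_iff_even.mpr
            (Int.even_pow.mpr ⟨hze, (by norm_num : (2:ℕ) ≠ 0)⟩))
        · exact hzo
      have hwz_even : Even (w - z) := by
        obtain ⟨u, hu⟩ := hwodd; obtain ⟨v, hv⟩ := hzodd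
        exact ⟨u - v, by omega⟩
      obtain ⟨h1, hh1⟩ := hwz_even
      have hh1' : w - z = 2 * h1 := by omega
      set h2 : ℤ := h1 + z with hh2def
      have hw12 : w = h1 + h2 := by omega
      have hz12 : z = h2 - h1 := by omega
      have hprod12 : h1 * h2 = 28 * Y ^ 4 := by
        have hthis : (w - z) * (w + z) = 7 * y ^ 4 := by linear_combination hw2
        rw [hYeq] at hthis
        have e2 : w + z = 2 * h1 + 2 * z := by omega
        rw [hh1', e2] at hthis
        have h4 : 4 * (h1 * h2) = 4 * (28 * Y ^ 4) := by
          simp only [hh2def]; linear_combination hthis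
        linarith
      have h1pos : 0 < h1 := by omega
      have h2pos : 0 < h2 := by omega
      have hcowz : IsCoprime w z := by
        rw [Int.isCoprime_iff_gcd_eq_one]
        by_contra hgne
        have hgdvd : ∀ p : ℕ, p.Prime → p ∣ Int.gcd w z → False := by
          intro p hp hpd
          have hpw : (p : ℤ) ∣ w := dvd_trans (Int.natCast_dvd_natCast.mpr hpd) (Int.gcd_dvd_left _ _)
          have hpz : (p : ℤ) ∣ z := dvd_trans (Int.natCast_dvd_natCast.mpr hpd) (Int.gcd_dvd_right _ _)
          have hpP : Prime (p : ℤ) := Nat.prime_iff_prime_int.mp hp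
          have hpy : ¬ (p : ℤ) ∣ y := by
            intro hpy
            have hpx2 : (p : ℤ) ∣ x ^ 2 := by
              have hxw : x ^ 2 = w - 6 * y ^ 2 := by rw [hwdef]; ring
              rw [hxw]
              exact dvd_sub hpw (Dvd.dvd.mul_left (dvd_pow hpy two_ne_zero) 6)
            have hpx : (p : ℤ) ∣ x := hpP.dvd_of_dvd_pow hpx2
            have hd1 : p ∣ Int.gcd x y := Nat.dvd_gcd
              (Int.natCast_dvd_natCast.mp (Int.dvd_natAbs.mpr hpx))
              (Int.natCast_dvd_natCast.mp (Int.dvd_natAbs.mpr hpy))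
            rw [hg] at hd1
            have := hp.one_lt
            have := Nat.eq_one_of_dvd_one hd1
            omega
          have hp7y : (p : ℤ) ∣ 7 * y ^ 4 := by
            have h7w : 7 * y ^ 4 = w ^ 2 - z ^ 2 := by linarith
            rw [h7w]
            exact dvd_sub (dvd_pow hpw two_ne_zero) (dvd_pow hpz two_ne_zero)
          rcases (hpP.dvd_mul).mp hp7y with hp7 | hpy4
          · have hp7' : p = 7 := by
              have h77 : p ∣ 7 := Int.natCast_dvd_natCast.mp (by exact_mod_cast hp7)
              exact (Nat.prime_dvd_prime_iff_eq hp (by norm_num)).mp h77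
            subst hp7'
            have h49 : (49 : ℤ) ∣ 7 * y ^ 4 := by
              have h7w : 7 * y ^ 4 = w ^ 2 - z ^ 2 := by linarith
              rw [h7w]
              obtain ⟨w1, hw1⟩ := hpw; obtain ⟨z1, hz1⟩ := hpz
              exact ⟨w1 ^ 2 - z1 ^ 2, by rw [hw1, hz1]; push_cast; ring⟩
            have h7y4 : (7 : ℤ) ∣ y ^ 4 := by
              obtain ⟨m, hm⟩ := h49
              exact ⟨m, by linarith⟩
            exact hpy (by exact_mod_cast (show (7:ℤ) ∣ y from
              (Nat.prime_iff_prime_int.mp (by norm_num)).dvd_of_dvd_pow h7y4))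
          · exact hpy (hpP.dvd_of_dvd_pow hpy4)
        obtain ⟨p, hp, hpd⟩ := Nat.exists_prime_and_dvd hgne
        exact hgdvd p hp hpd
      have hco12 : IsCoprime h1 h2 := by
        obtain ⟨A, B, hAB⟩ := hcowz
        exact ⟨A - B, A + B, by linear_combination hAB - A * hw12 - B * hz12⟩
      -- STAGE 2
      have hstage2 : ∀ a b : ℤ, 0 < a → 0 < b → Even a → Odd b → IsCoprime a b →
          x ^ 2 = 28*a^4 + b^4 - 24*a^2*b^2 → y = 2*a*b → False := by
        intro a b hap hbp hae hbo hcoab hxx hyab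
        set c : ℤ := b^2 - 12*a^2 with hcdef
        have hc2 : c^2 - x^2 = 116*a^4 := by
          simp only [hcdef]; linear_combination - hxx
        have hcodd : Odd c := by
          obtain ⟨t, ht⟩ := hbo; obtain ⟨a0, ha0⟩ := hae
          exact ⟨2*t^2+2*t-24*a0^2, by rw [hcdef, ht, ha0]; ring⟩
        have hcocx : IsCoprime c x := by
          rw [Int.isCoprime_iff_gcd_eq_one]
          by_contra hgne
          obtain ⟨p, hp, hpd⟩ := Nat.exists_prime_and_dvd hgne
          have hpc : (p:ℤ) ∣ c := dvd_trans (Int.natCast_dvd_natCast.mpr hpd) (Int.gcd_dvd_left _ _)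
          have hpx : (p:ℤ) ∣ x := dvd_trans (Int.natCast_dvd_natCast.mpr hpd) (Int.gcd_dvd_right _ _)
          have hpP : Prime (p:ℤ) := Nat.prime_iff_prime_int.mp hp
          have hp2 : p ≠ 2 := by
            rintro rfl
            obtain ⟨m, hm⟩ := hpc
            obtain ⟨t, ht⟩ := hcodd
            omega
          have hpa : ¬ (p:ℤ) ∣ a := by
            intro hpa
            have hpb2 : (p:ℤ) ∣ b^2 := by
              have hb2 : b^2 = c + 12*a^2 := by rw [hcdef]; ring
              rw [hb2]
              exact dvd_add hpc (Dvd.dvd.mul_left (dvd_pow hpa two_ne_zero) 12)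
            have hpb := hpP.dvd_of_dvd_pow hpb2
            have := Int.isUnit_iff.mp (hcoab.isUnit_of_dvd' hpa hpb)
            have := hp.one_lt
            omega
          have hp116 : (p:ℤ) ∣ 4 * (29 * a^4) := by
            have h116 : 4 * (29 * a^4) = c^2 - x^2 := by linarith
            rw [h116]
            exact dvd_sub (dvd_pow hpc two_ne_zero) (dvd_pow hpx two_ne_zero)
          rcases hpP.dvd_mul.mp hp116 with h4 | h29a
          · have hpd2 : (p:ℤ) ∣ 2 := hpP.dvd_of_dvd_pow (show (p:ℤ) ∣ 2^2 by norm_num; exact h4)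
            have : p ∣ 2 := Int.natCast_dvd_natCast.mp (by exact_mod_cast hpd2)
            exact hp2 ((Nat.prime_dvd_prime_iff_eq hp (by norm_num)).mp this)
          · rcases hpP.dvd_mul.mp h29a with h29 | ha4
            · have hp29 : p = 29 := by
                have h29' : p ∣ 29 := Int.natCast_dvd_natCast.mp (by exact_mod_cast h29)
                exact (Nat.prime_dvd_prime_iff_eq hp (by norm_num)).mp h29'
              subst hp29
              obtain ⟨c1, hc1⟩ := hpc
              obtain ⟨x1, hx1⟩ := hpx
              have h29a4 : (29:ℤ) ∣ 4 * a^4 := by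
                refine ⟨c1^2 - x1^2, ?_⟩
                have : 29 * (4 * a^4) = 29 * (29 * (c1^2 - x1^2)) := by
                  push_cast at hc1 hx1
                  linear_combination - hc2 + (c + 29*c1)*hc1 - (x + 29*x1)*hx1
                linarith
              rcases (show Prime (29:ℤ) by norm_num).dvd_mul.mp h29a4 with h4' | ha4'
              · exact absurd h4' (by norm_num)
              · exact hpa ((show Prime (29:ℤ) by norm_num).dvd_of_dvd_pow ha4')
            · exact hpa (hpP.dvd_of_dvd_pow ha4)
        have hcx_even : Even (c - x) := by
          obtain ⟨u, hu⟩ := hcodd; obtain ⟨v, hv⟩ := (⟨s, hs⟩ : Odd x)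
          exact ⟨u - v, by omega⟩
        obtain ⟨g1, hg1⟩ := hcx_even
        have hg1' : c - x = 2 * g1 := by omega
        set g2 : ℤ := g1 + x with hg2def
        have hcg : c = g1 + g2 := by omega
        have hxg : x = g2 - g1 := by omega
        have hprodg : g1 * g2 = 29 * a^4 := by
          have hthis : (c - x) * (c + x) = 116 * a^4 := by linear_combination hc2
          have e2 : c + x = 2 * g1 + 2 * x := by omega
          rw [hg1', e2] at hthis
          have h4 : 4 * (g1 * g2) = 4 * (29 * a^4) := by
            simp only [hg2def]; linear_combination hthis
          linarith
        have hcogg : IsCoprime g1 g2 := by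
          obtain ⟨A, B, hAB⟩ := hcocx
          exact ⟨A - B, A + B, by linear_combination hAB - A * hcg - B * hxg⟩
        have hgpos : 0 < g1 * g2 := by rw [hprodg]; positivity
        -- STAGE 2 KEY : E*O = 29*a^4, O odd, E+O = ±c
        have key3 : ∀ E O : ℤ, 0 < E → 0 < O → Odd O → IsCoprime E O →
            E * O = 29 * a^4 → (E + O = c ∨ E + O = -c) → False := by
          intro E O hEp hOp hOodd hcoEO hEO hsum
          have h29P : Prime (29:ℤ) := by norm_num
          rcases h29P.dvd_mul.mp (⟨a^4, hEO⟩ : (29:ℤ) ∣ E * O) with h29E | h29O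
          · -- 29 ∣ E
            obtain ⟨E', hE'⟩ := h29E
            have hE'O : E' * O = a^4 := by
              have : 29 * (E' * O) = 29 * a^4 := by rw [← hEO, hE']; ring
              linarith
            have hcoE'O : IsCoprime E' O :=
              IsCoprime.of_isCoprime_of_dvd_left hcoEO ⟨29, by rw [hE']; ring⟩
            have hE'p : 0 < E' := by omega
            obtain ⟨C, D, hCp, hDp, hCE, hDO⟩ := pow4_of_coprime hcoE'O hE'p hOp hE'O
            have hCD : C * D = a := by
              apply pow4_inj (by positivity) hap
              rw [mul_pow, ← hCE, ← hDO, hE'O]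
            have hDodd : Odd D := by
              rcases Int.even_or_odd D with hDe | hDo
              · exfalso
                exact (Int.not_odd_iff_even.mpr
                  (hDO ▸ Int.even_pow.mpr ⟨hDe, (by norm_num : (4:ℕ) ≠ 0)⟩)) hOodd
              · exact hDo
            have hCeven : Even C := by
              rcases Int.even_or_odd C with hCe | hCo
              · exact hCe
              · exfalso
                exact (Int.not_odd_iff_even.mpr (hCD ▸ hae)) (hCo.mul hDodd)
            rcases hsum with hcc | hcc
            · -- survivor : apply IH
              have hfinal : D^4 + 12*D^2*C^2 + 29*C^4 = b^2 := by
                have hcc' : 29*C^4 + D^4 = c := by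
                  linear_combination -29*hCE - hDO - hE' + hcc
                linear_combination hcc' + hcdef + 12*(C*D+a)*hCD
              have hylarge : C < y := by
                have hyC : y = 2*C*D*b := by rw [hyab, ← hCD]; ring
                have hDb : 1 ≤ D * b := mul_pos hDp hbp
                have hpos2 : (0:ℤ) < 2*(D*b) - 1 := by linarith
                have hkey : 0 < C*(2*(D*b)-1) := mul_pos hCp hpos2
                have hexp : C*(2*(D*b)-1) = y - C := by rw [hyC]; ring
                linarith
              have hCn : C.natAbs < n := by
                have h1' : C.natAbs < y.natAbs := by omega
                omega
              exact IH C.natAbs hCn D C b hDp hCp hbp le_rfl hfinal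
            · -- killed mod 16
              have hcc' : 29*C^4 + D^4 = -(b^2 - 12*C^2*D^2) := by
                linear_combination -29*hCE - hDO - hE' + hcc - hcdef - 12*(C*D+a)*hCD
              obtain ⟨C0, hC0⟩ := hCeven
              obtain ⟨D0, hD0⟩ := hDodd
              obtain ⟨t, ht⟩ := hbo
              have hC0' : C = 2*C0 := by omega
              rw [hC0', hD0, ht] at hcc'
              have hcast := congrArg (fun t : ℤ => (t : ZMod 16)) hcc'
              push_cast at hcast
              exact zmod16_key1 (t : ZMod 16) (C0 : ZMod 16) (D0 : ZMod 16)
                (by linear_combination hcast)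
          · -- 29 ∣ O
            obtain ⟨O', hO'⟩ := h29O
            have hEO' : E * O' = a^4 := by
              have : 29 * (E * O') = 29 * a^4 := by rw [← hEO, hO']; ring
              linarith
            have hcoEO' : IsCoprime E O' :=
              IsCoprime.of_isCoprime_of_dvd_right hcoEO ⟨29, by rw [hO']; ring⟩
            have hO'p : 0 < O' := by omega
            obtain ⟨C, D, hCp, hDp, hCE, hDO⟩ := pow4_of_coprime hcoEO' hEp hO'p hEO'
            have hCD : C * D = a := by
              apply pow4_inj (by positivity) hap
              rw [mul_pow, ← hCE, ← hDO, hEO']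
            have hO'odd : Odd O' := by
              rcases Int.even_or_odd O' with hOe | hOo
              · exfalso
                obtain ⟨m, hm⟩ := hOe
                obtain ⟨m2, hm2⟩ := hOodd
                omega
              · exact hOo
            have hDodd : Odd D := by
              rcases Int.even_or_odd D with hDe | hDo
              · exfalso
                exact (Int.not_odd_iff_even.mpr
                  (hDO ▸ Int.even_pow.mpr ⟨hDe, (by norm_num : (4:ℕ) ≠ 0)⟩)) hO'odd
              · exact hDo
            have hCeven : Even C := by
              rcases Int.even_or_odd C with hCe | hCo
              · exact hCe
              · exfalso
                exact (Int.not_odd_iff_even.mpr (hCD ▸ hae)) (hCo.mul hDodd)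
            obtain ⟨C0, hC0⟩ := hCeven
            obtain ⟨D0, hD0⟩ := hDodd
            obtain ⟨t, ht⟩ := hbo
            have hC0' : C = 2*C0 := by omega
            rcases hsum with hcc | hcc
            · have hcc' : C^4 + 29*D^4 = b^2 - 12*C^2*D^2 := by
                linear_combination -hCE - 29*hDO - hO' + hcc + hcdef + 12*(C*D+a)*hCD
              rw [hC0', hD0, ht] at hcc'
              have hcast := congrArg (fun t : ℤ => (t : ZMod 16)) hcc'
              push_cast at hcast
              exact zmod16_key2 (t : ZMod 16) (C0 : ZMod 16) (D0 : ZMod 16)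
                (by linear_combination hcast)
            · have hcc' : C^4 + 29*D^4 = -(b^2 - 12*C^2*D^2) := by
                linear_combination -hCE - 29*hDO - hO' + hcc - hcdef - 12*(C*D+a)*hCD
              rw [hC0', hD0, ht] at hcc'
              have hcast := congrArg (fun t : ℤ => (t : ZMod 16)) hcc'
              push_cast at hcast
              exact zmod16_key3 (t : ZMod 16) (C0 : ZMod 16) (D0 : ZMod 16)
                (by linear_combination hcast)
        -- dispatch on signs and parities of g1 g2
        rcases mul_pos_iff.mp hgpos with ⟨hg1pos, hg2pos⟩ | ⟨hg1neg, hg2neg⟩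
        · rcases Int.even_or_odd g1 with hge | hgo
          · have hg2odd : Odd g2 := by
              obtain ⟨u, hu⟩ := hcodd; obtain ⟨m, hm⟩ := hge
              exact ⟨u - m, by omega⟩
            exact key3 g1 g2 hg1pos hg2pos hg2odd hcogg hprodg (Or.inl (by omega))
          · exact key3 g2 g1 hg2pos hg1pos hgo hcogg.symm
              (by rw [← hprodg]; ring) (Or.inl (by omega))
        · rcases Int.even_or_odd g1 with hge | hgo
          · have hg2odd : Odd (-g2) := by
              obtain ⟨u, hu⟩ := hcodd; obtain ⟨m, hm⟩ := hge
              exact ⟨m - u - 1, by omega⟩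
            exact key3 (-g1) (-g2) (by omega) (by omega) hg2odd
              (hcogg.neg_left.neg_right)
              (by rw [← hprodg]; ring) (Or.inr (by omega))
          · have hg1odd : Odd (-g1) := by
              obtain ⟨m, hm⟩ := hgo; exact ⟨-m - 1, by omega⟩
            exact key3 (-g2) (-g1) (by omega) (by omega) hg1odd
              (hcogg.neg_left.neg_right).symm
              (by rw [← hprodg]; ring) (Or.inr (by omega))
      -- STAGE 1 KEY
      have hstage1 : ∀ E O : ℤ, 0 < E → 0 < O → Odd O → IsCoprime E O →
          E * O = 28 * Y ^ 4 → E + O = w → False := by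
        intro E O hEp hOp hOodd hcoEO hEO hsumw
        have h4E : (4:ℤ) ∣ E := by
          obtain ⟨o, ho⟩ := hOodd
          have hco2 : IsCoprime (2:ℤ) O := ⟨-o, 1, by rw [ho]; ring⟩
          have hco4 : IsCoprime (4:ℤ) O := by
            rw [show (4:ℤ) = 2^2 by norm_num]
            exact hco2.pow_left
          exact hco4.dvd_of_dvd_mul_right ⟨7*Y^4, by rw [hEO]; ring⟩
        obtain ⟨E', hE'⟩ := h4E
        have hE'O : E' * O = 7 * Y^4 := by
          have : 4 * (E' * O) = 4 * (7 * Y^4) := by linear_combination hEO - O*hE'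
          linarith
        have hcoE'O : IsCoprime E' O :=
          IsCoprime.of_isCoprime_of_dvd_left hcoEO ⟨4, by rw [hE']; ring⟩
        have hE'p : 0 < E' := by omega
        have h7P : Prime (7:ℤ) := by norm_num
        rcases h7P.dvd_mul.mp (⟨Y^4, hE'O⟩ : (7:ℤ) ∣ E' * O) with h7E | h7O
        · obtain ⟨E'', hE''⟩ := h7E
          have hE''O : E'' * O = Y^4 := by
            have : 7 * (E'' * O) = 7 * Y^4 := by rw [← hE'O, hE'']; ring
            linarith
          have hcoE''O : IsCoprime E'' O :=
            IsCoprime.of_isCoprime_of_dvd_left hcoE'O ⟨7, by rw [hE'']; ring⟩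
          have hE''p : 0 < E'' := by omega
          obtain ⟨a, b, hap, hbp, haE, hbO⟩ := pow4_of_coprime hcoE''O hE''p hOp hE''O
          have hab : a * b = Y := by
            apply pow4_inj (by positivity) hYpos
            rw [mul_pow, ← haE, ← hbO, hE''O]
          have hbodd : Odd b := by
            rcases Int.even_or_odd b with hbe | hbo
            · exfalso
              exact (Int.not_odd_iff_even.mpr
                (hbO ▸ Int.even_pow.mpr ⟨hbe, (by norm_num : (4:ℕ) ≠ 0)⟩)) hOodd
            · exact hbo
          have hw28 : w = 28*a^4 + b^4 := by rw [← hsumw, hE', hE'', haE, hbO]; ring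
          rcases Int.even_or_odd a with hae | hao
          · -- descend via stage 2
            have hcoab : IsCoprime a b := by
              have h1' : IsCoprime a O :=
                IsCoprime.of_isCoprime_of_dvd_left hcoE''O ⟨a^3, by rw [haE]; ring⟩
              exact IsCoprime.of_isCoprime_of_dvd_right h1' ⟨b^3, by rw [hbO]; ring⟩
            have hyab : y = 2*a*b := by rw [hYeq, ← hab]; ring
            have hxx : x^2 = 28*a^4 + b^4 - 24*a^2*b^2 := by
              have hwx : w = x^2 + 24*Y^2 := by rw [hwdef, hYeq]; ring
              have hY2 : Y^2 = a^2*b^2 := by rw [← hab]; ring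
              rw [hwx, hY2] at hw28
              linarith
            exact hstage2 a b hap hbp hae hbodd hcoab hxx hyab
          · -- a odd : killed mod 8
            have hZ : x^2 + 24*Y^2 = 28*a^4 + b^4 := by
              have hwx : w = x^2 + 24*Y^2 := by rw [hwdef, hYeq]; ring
              rw [← hwx, hw28]
            obtain ⟨m, hm⟩ := hao
            obtain ⟨t, ht⟩ := hbodd
            rw [hs, hm, ht] at hZ
            have hcast := congrArg (fun u : ℤ => (u : ZMod 8)) hZ
            push_cast at hcast
            exact zmod8_key4 (s : ZMod 8) (t : ZMod 8) (m : ZMod 8) (Y : ZMod 8)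
              (by linear_combination hcast)
        · obtain ⟨O', hO'⟩ := h7O
          have hE'O' : E' * O' = Y^4 := by
            have : 7 * (E' * O') = 7 * Y^4 := by rw [← hE'O, hO']; ring
            linarith
          have hcoE'O' : IsCoprime E' O' :=
            IsCoprime.of_isCoprime_of_dvd_right hcoE'O ⟨7, by rw [hO']; ring⟩
          have hO'p : 0 < O' := by omega
          obtain ⟨a, b, hap, hbp, haE, hbO⟩ := pow4_of_coprime hcoE'O' hE'p hO'p hE'O'
          have hO'odd : Odd O' := by
            rcases Int.even_or_odd O' with hOe | hOo
            · exfalso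
              obtain ⟨mm, hmm⟩ := hOe
              obtain ⟨m2, hm2⟩ := hOodd
              omega
            · exact hOo
          have hbodd : Odd b := by
            rcases Int.even_or_odd b with hbe | hbo
            · exfalso
              exact (Int.not_odd_iff_even.mpr
                (hbO ▸ Int.even_pow.mpr ⟨hbe, (by norm_num : (4:ℕ) ≠ 0)⟩)) hO'odd
            · exact hbo
          have hw47 : w = 4*a^4 + 7*b^4 := by
            linear_combination -hsumw + hE' + 4*haE + hO' + 7*hbO
          have hZ : x^2 + 24*Y^2 = 4*a^4 + 7*b^4 := by
            have hwx : w = x^2 + 24*Y^2 := by rw [hwdef, hYeq]; ring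
            rw [← hwx, hw47]
          obtain ⟨t, ht⟩ := hbodd
          rw [hs, ht] at hZ
          have hcast := congrArg (fun u : ℤ => (u : ZMod 8)) hZ
          push_cast at hcast
          exact zmod8_key3 (s : ZMod 8) (t : ZMod 8) (Y : ZMod 8) (a : ZMod 8)
            (by linear_combination hcast)
      -- dispatch stage 1
      rcases Int.even_or_odd h1 with h1e | h1o
      · have h2odd : Odd h2 := by
          obtain ⟨u, hu⟩ := hwodd; obtain ⟨m, hm⟩ := h1e
          exact ⟨u - m, by omega⟩
        exact hstage1 h1 h2 h1pos h2pos h2odd hco12 hprod12 hw12.symm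
      · exact hstage1 h2 h1 h2pos h1pos h1o hco12.symm
          (by rw [← hprod12]; ring) (by omega)
    · -- y odd
      obtain ⟨k, hk⟩ := hyo
      rcases Int.even_or_odd x with hxe | hxo
      · -- x even
        obtain ⟨s0, hs0⟩ := hxe
        have hs' : x = 2 * s0 := by omega
        have huv : (w - z) * (w + z) = 7 * y ^ 4 := by linear_combination hw2
        have hwm : w = 4 * (s0^2 + 6*k^2 + 6*k + 1) + 2 := by
          rw [hwdef, hs', hk]; ring
        have hsum : (w - z) + (w + z) = 2 * (4 * (s0^2+6*k^2+6*k+1) + 2) := by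
          rw [← hwm]; ring
        rw [hk] at huv
        have hcast1 := congrArg (fun u : ℤ => (u : ZMod 8)) huv
        have hcast2 := congrArg (fun u : ℤ => (u : ZMod 8)) hsum
        push_cast at hcast1 hcast2
        exact zmod8_key2 ((w - z : ℤ) : ZMod 8) ((w + z : ℤ) : ZMod 8)
          (k : ZMod 8) ((s0^2+6*k^2+6*k+1 : ℤ) : ZMod 8)
          (by push_cast; linear_combination hcast1)
          (by push_cast; linear_combination hcast2)
      · -- x odd
        obtain ⟨s1, hs1⟩ := hxo
        have heq' := heq
        rw [hs1, hk] at heq'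
        have hcast := congrArg (fun u : ℤ => (u : ZMod 8)) heq'
        push_cast at hcast
        exact zmod8_key1 (s1 : ZMod 8) (k : ZMod 8) (z : ZMod 8)
          (by linear_combination hcast)
  · -- non coprime : reduce
    have hgpos : 0 < Int.gcd x y := Int.gcd_pos_iff.mpr (Or.inl (by omega))
    set d : ℤ := (Int.gcd x y : ℤ) with hd
    have hdpos : 0 < d := by rw [hd]; exact_mod_cast hgpos
    have hd2 : 2 ≤ d := by
      have : (1:ℤ) ≤ d := hdpos
      rcases eq_or_lt_of_le this with h' | h'
      · exfalso; apply hg; omega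
      · omega
    obtain ⟨x1, hx1⟩ : d ∣ x := Int.gcd_dvd_left x y
    obtain ⟨y1, hy1⟩ : d ∣ y := Int.gcd_dvd_right x y
    have heq' := heq
    rw [hx1, hy1] at heq'
    have hQ : z ^ 2 = d ^ 4 * (x1 ^ 4 + 12 * x1 ^ 2 * y1 ^ 2 + 29 * y1 ^ 4) := by
      linear_combination - heq'
    have hdz : d ^ 2 ∣ z := by
      rw [← Int.pow_dvd_pow_iff (two_ne_zero)]
      exact ⟨x1 ^ 4 + 12 * x1 ^ 2 * y1 ^ 2 + 29 * y1 ^ 4, by rw [hQ]; ring⟩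
    obtain ⟨z1, hz1⟩ := hdz
    have hQ' : x1 ^ 4 + 12 * x1 ^ 2 * y1 ^ 2 + 29 * y1 ^ 4 = z1 ^ 2 := by
      have hcan : d ^ 4 * (x1 ^ 4 + 12 * x1 ^ 2 * y1 ^ 2 + 29 * y1 ^ 4) = d ^ 4 * z1 ^ 2 := by
        rw [← hQ, hz1]; ring
      exact mul_left_cancel₀ (pow_ne_zero 4 (by omega)) hcan
    have hx1p : 0 < x1 := by
      rcases mul_pos_iff.mp (hx1 ▸ hx) with ⟨_, h'⟩ | ⟨h', _⟩
      · exact h'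
      · exfalso; omega
    have hy1p : 0 < y1 := by
      rcases mul_pos_iff.mp (hy1 ▸ hy) with ⟨_, h'⟩ | ⟨h', _⟩
      · exact h'
      · exfalso; omega
    have hz1p : 0 < z1 := by
      have hd2pos : 0 < d ^ 2 := pow_pos hdpos 2
      rcases mul_pos_iff.mp (hz1 ▸ hz) with ⟨_, h'⟩ | ⟨h', _⟩
      · exact h'
      · exfalso; linarith
    have hyna : y.natAbs = d.natAbs * y1.natAbs := by rw [hy1, Int.natAbs_mul]
    have hlt : y1.natAbs < n := by
      have h2d : 2 ≤ d.natAbs := by omega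
      have h1y : 1 ≤ y1.natAbs := by omega
      have : 2 * y1.natAbs ≤ d.natAbs * y1.natAbs := Nat.mul_le_mul_right _ h2d
      omega
    exact IH y1.natAbs hlt x1 y1 z1 hx1p hy1p hz1p le_rfl hQ'

theorem stmt6 :
    ¬ ∃ x y z : ℤ, 0 < x ∧ 0 < y ∧ 0 < z ∧
      x ^ 4 + 12 * x ^ 2 * y ^ 2 + 29 * y ^ 4 = z ^ 2 := by
  rintro ⟨x, y, z, hx, hy, hz, heq⟩
  exact descent y.natAbs x y z hx hy hz le_rfl heq
end

section
/- The diophantine equation x⁴ + 4x²y² − 19y⁴ = z² has no solution in positive integers x, y, z. -/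
lemma sq_pos_inj {u c : ℤ} (hu : 0 < u) (hc : 0 ≤ c) (h : u ^ 2 = c ^ 2) : u = c := by
  have h0 : (u - c) * (u + c) = 0 := by ring_nf; linarith
  rcases mul_eq_zero.mp h0 with h1 | h1 <;> linarith

lemma int_coprime_of_forall_prime {u v : ℤ}
    (h : ∀ r : ℤ, Prime r → r ∣ u → r ∣ v → False) : IsCoprime u v := by
  rw [Int.isCoprime_iff_gcd_eq_one]
  by_contra hg
  obtain ⟨p, hp, hpd⟩ := Nat.exists_prime_and_dvd hg
  have hpz : Prime (p : ℤ) := Nat.prime_iff_prime_int.mp hp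
  exact h p hpz (dvd_trans (Int.natCast_dvd_natCast.mpr hpd) (Int.gcd_dvd_left _ _))
    (dvd_trans (Int.natCast_dvd_natCast.mpr hpd) (Int.gcd_dvd_right _ _))

lemma sq_split {a b c : ℤ} (ha : 0 < a) (hb : 0 < b) (hc : 0 ≤ c)
    (h : IsCoprime a b) (heq : a * b = c ^ 2) :
    ∃ s t : ℤ, 0 < s ∧ 0 < t ∧ a = s ^ 2 ∧ b = t ^ 2 ∧ s * t = c := by
  obtain ⟨a0, ha0⟩ := Int.sq_of_isCoprime h heq
  obtain ⟨b0, hb0⟩ := Int.sq_of_isCoprime h.symm (by rw [mul_comm]; exact heq)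
  have ha' : a = |a0| ^ 2 := by
    rcases ha0 with h1 | h1
    · rw [sq_abs]; exact h1
    · nlinarith [sq_nonneg a0]
  have hb' : b = |b0| ^ 2 := by
    rcases hb0 with h1 | h1
    · rw [sq_abs]; exact h1
    · nlinarith [sq_nonneg b0]
  have hA : 0 < |a0| := by
    rcases (abs_nonneg a0).lt_or_eq with h1 | h1
    · exact h1
    · exfalso; rw [ha', ← h1] at ha; simp at ha
  have hB : 0 < |b0| := by
    rcases (abs_nonneg b0).lt_or_eq with h1 | h1
    · exact h1
    · exfalso; rw [hb', ← h1] at hb; simp at hb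
  refine ⟨|a0|, |b0|, hA, hB, ha', hb', ?_⟩
  have h2 : (|a0| * |b0|) ^ 2 = c ^ 2 := by rw [mul_pow, ← ha', ← hb', heq]
  exact sq_pos_inj (mul_pos hA hB) hc h2

lemma quartic_split {a b c : ℤ} (ha : 0 < a) (hb : 0 < b) (hc : 0 < c)
    (h : IsCoprime a b) (heq : a * b = c ^ 4) :
    ∃ s t : ℤ, 0 < s ∧ 0 < t ∧ a = s ^ 4 ∧ b = t ^ 4 ∧ s * t = c := by
  obtain ⟨s, t, hs, ht, has, hbt, hst⟩ :=
    sq_split (c := c ^ 2) ha hb (by positivity) h (by rw [heq]; ring)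
  have hco : IsCoprime s t := by
    have h1 : IsCoprime (s ^ 2) (t ^ 2) := by rwa [← has, ← hbt]
    exact (IsCoprime.of_isCoprime_of_dvd_left
      (IsCoprime.of_isCoprime_of_dvd_right h1 (dvd_pow_self t two_ne_zero))
      (dvd_pow_self s two_ne_zero))
  obtain ⟨u, v, hu, hv, hsu, htv, huv⟩ :=
    sq_split hs ht (le_of_lt hc) hco hst
  exact ⟨u, v, hu, hv, by rw [has, hsu]; ring, by rw [hbt, htv]; ring, huv⟩

lemma prime_quartic_split {p a b c : ℤ} (hp : Prime p) (ha : 0 < a) (hb : 0 < b)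
    (hc : 0 < c) (h : IsCoprime a b) (heq : a * b = p * c ^ 4) :
    ∃ s t : ℤ, 0 < s ∧ 0 < t ∧ s * t = c ∧
      ((a = p * s ^ 4 ∧ b = t ^ 4) ∨ (a = s ^ 4 ∧ b = p * t ^ 4)) := by
  have hppos : 0 < p := by
    rcases lt_trichotomy p 0 with h1 | h1 | h1
    · exfalso; nlinarith [mul_pos ha hb, pow_pos hc 4]
    · exact absurd h1 hp.ne_zero
    · exact h1
  have hpd : p ∣ a * b := ⟨c ^ 4, heq⟩
  rcases hp.dvd_mul.mp hpd with hpa | hpb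
  · obtain ⟨a1, ha1⟩ := hpa
    have ha1pos : 0 < a1 := by nlinarith
    have key : a1 * b = c ^ 4 := by
      have : p * (a1 * b) = p * c ^ 4 := by rw [← heq, ha1]; ring
      exact mul_left_cancel₀ (ne_of_gt hppos) this
    have hco : IsCoprime a1 b :=
      IsCoprime.of_isCoprime_of_dvd_left h ⟨p, by rw [ha1]; ring⟩
    obtain ⟨s, t, hs, ht, has, hbt, hst⟩ := quartic_split ha1pos hb hc hco key
    exact ⟨s, t, hs, ht, hst, Or.inl ⟨by rw [ha1, has], hbt⟩⟩
  · obtain ⟨b1, hb1⟩ := hpb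
    have hb1pos : 0 < b1 := by nlinarith
    have key : a * b1 = c ^ 4 := by
      have : p * (a * b1) = p * c ^ 4 := by rw [← heq, hb1]; ring
      exact mul_left_cancel₀ (ne_of_gt hppos) this
    have hco : IsCoprime a b1 :=
      IsCoprime.of_isCoprime_of_dvd_right h ⟨p, by rw [hb1]; ring⟩
    obtain ⟨s, t, hs, ht, has, hbt, hst⟩ := quartic_split ha hb1pos hc hco key
    exact ⟨s, t, hs, ht, hst, Or.inr ⟨has, by rw [hb1, hbt]⟩⟩

lemma prime_sq_split {p a b c : ℤ} (hp : Prime p) (ha : 0 < a) (hb : 0 < b)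
    (hc : 0 ≤ c) (h : IsCoprime a b) (heq : a * b = p * c ^ 2) :
    ∃ s t : ℤ, 0 < s ∧ 0 < t ∧ s * t = c ∧
      ((a = p * s ^ 2 ∧ b = t ^ 2) ∨ (a = s ^ 2 ∧ b = p * t ^ 2)) := by
  have hcne : c ≠ 0 := by
    intro h0
    rw [h0] at heq
    have h2 : a * b = 0 := by simpa using heq
    nlinarith [mul_pos ha hb]
  have hc2 : 0 < c ^ 2 := by positivity
  have hppos : 0 < p := by nlinarith [mul_pos ha hb]
  have hpd : p ∣ a * b := ⟨c ^ 2, heq⟩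
  rcases hp.dvd_mul.mp hpd with hpa | hpb
  · obtain ⟨a1, ha1⟩ := hpa
    have ha1pos : 0 < a1 := by nlinarith
    have key : a1 * b = c ^ 2 := by
      have : p * (a1 * b) = p * c ^ 2 := by rw [← heq, ha1]; ring
      exact mul_left_cancel₀ (ne_of_gt hppos) this
    have hco : IsCoprime a1 b :=
      IsCoprime.of_isCoprime_of_dvd_left h ⟨p, by rw [ha1]; ring⟩
    obtain ⟨s, t, hs, ht, has, hbt, hst⟩ := sq_split ha1pos hb hc hco key
    exact ⟨s, t, hs, ht, hst, Or.inl ⟨by rw [ha1, has], hbt⟩⟩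
  · obtain ⟨b1, hb1⟩ := hpb
    have hb1pos : 0 < b1 := by nlinarith
    have key : a * b1 = c ^ 2 := by
      have : p * (a * b1) = p * c ^ 2 := by rw [← heq, hb1]; ring
      exact mul_left_cancel₀ (ne_of_gt hppos) this
    have hco : IsCoprime a b1 :=
      IsCoprime.of_isCoprime_of_dvd_right h ⟨p, by rw [hb1]; ring⟩
    obtain ⟨s, t, hs, ht, has, hbt, hst⟩ := sq_split ha hb1pos hc hco key
    exact ⟨s, t, hs, ht, hst, Or.inr ⟨has, by rw [hb1, hbt]⟩⟩

lemma odd_cast {R : Type*} [Ring R] {n : ℤ} (h : Odd n) : Odd ((n : R)) := by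
  obtain ⟨k, hk⟩ := h
  exact ⟨(k : R), by rw [hk]; push_cast; ring⟩

lemma even_cast {R : Type*} [Ring R] {n : ℤ} (h : Even n) : Even ((n : R)) := by
  obtain ⟨k, hk⟩ := h
  exact ⟨(k : R), by rw [hk]; push_cast; ring⟩

instance : DecidablePred (Odd : ZMod 8 → Prop) := fun _ => by unfold Odd; infer_instance
instance : DecidablePred (Even : ZMod 8 → Prop) := fun _ => by unfold Even; infer_instance
instance : DecidablePred (Odd : ZMod 4 → Prop) := fun _ => by unfold Odd; infer_instance
instance : DecidablePred (Even : ZMod 4 → Prop) := fun _ => by unfold Even; infer_instance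

lemma dec1 : ∀ x s t : ZMod 8, Odd s → Odd t →
    2 * x ^ 2 ≠ 23 * s ^ 4 + t ^ 4 - 4 * s ^ 2 * t ^ 2 := by decide
lemma dec2 : ∀ x e f : ZMod 8, Odd e →
    x ^ 2 ≠ 23 * e ^ 4 + 4 * f ^ 4 - 8 * e ^ 2 * f ^ 2 := by decide
lemma dec3 : ∀ x e f : ZMod 8, Odd e → Odd f →
    x ^ 2 ≠ e ^ 4 - 8 * e ^ 2 * f ^ 2 + 92 * f ^ 4 := by decide
lemma dec4 : ∀ e g h : ZMod 8, Odd e → Even (g * h) →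
    e ^ 2 ≠ 19 * h ^ 4 + 4 * g ^ 2 * h ^ 2 - g ^ 4 := by decide
lemma dec5 : ∀ x e f : ZMod 4, Even x → Odd e → Even f →
    x ^ 2 ≠ e ^ 4 - 8 * e ^ 2 * f ^ 2 + 92 * f ^ 4 := by decide

lemma descent_II {x e f : ℤ} (hx : 0 < x) (he : 0 < e) (hf : 0 < f)
    (hco : IsCoprime e f) (hodd : Odd e)
    (heq : x ^ 2 = e ^ 4 - 8 * e ^ 2 * f ^ 2 + 92 * f ^ 4) :
    ∃ X Y Z : ℤ, 0 < X ∧ 0 < Y ∧ 0 < Z ∧ Y ∣ f ∧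
      X ^ 4 + 4 * X ^ 2 * Y ^ 2 - 19 * Y ^ 4 = Z ^ 2 := by
  have prime19 : Prime (19 : ℤ) := by norm_num
  -- f is even
  have hfe : Even f := by
    rcases Int.even_or_odd f with h | h
    · exact h
    · exfalso
      have hcast := congrArg (fun n : ℤ => (n : ZMod 8)) heq
      push_cast at hcast
      exact dec3 _ _ _ (odd_cast hodd) (odd_cast h) hcast
  -- x is odd
  have hxodd : Odd x := by
    rcases Int.even_or_odd x with h | h
    · exfalso
      have hcast := congrArg (fun n : ℤ => (n : ZMod 4)) heq
      push_cast at hcast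
      exact dec5 _ _ _ (even_cast h) (odd_cast hodd) (even_cast hfe) hcast
    · exact h
  set c : ℤ := e ^ 2 - 4 * f ^ 2 with hcdef
  have hcodd : Odd c := by
    obtain ⟨k, hk⟩ := hodd
    obtain ⟨l, hl⟩ := hfe
    exact ⟨2 * k ^ 2 + 2 * k - 8 * l ^ 2, by rw [hcdef, hk, hl]; ring⟩
  have hxc : x ^ 2 - c ^ 2 = 76 * f ^ 4 := by rw [heq, hcdef]; ring
  have hf4 : 0 < f ^ 4 := by positivity
  have h1 : 0 < x - c := by nlinarith
  have h2 : 0 < x + c := by nlinarith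
  obtain ⟨k, hk⟩ := hxodd
  obtain ⟨l, hl⟩ := hcodd
  set u : ℤ := k - l with hudef
  set v : ℤ := k + l + 1 with hvdef
  have hu : x - c = 2 * u := by rw [hudef, hk, hl]; ring
  have hv : x + c = 2 * v := by rw [hvdef, hk, hl]; ring
  have hu0 : 0 < u := by linarith
  have hv0 : 0 < v := by linarith
  have hxuv : x = u + v := by linarith [hu, hv]
  have hcuv : c = v - u := by linarith [hu, hv]
  have huv : u * v = 19 * f ^ 4 := by
    have h4 : 4 * (u * v) = 4 * (19 * f ^ 4) := by
      have : (x - c) * (x + c) = 76 * f ^ 4 := by linear_combination hxc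
      rw [hu, hv] at this; linarith [this]
    linarith
  have hcoUV : IsCoprime u v := by
    apply int_coprime_of_forall_prime
    intro r hr h1r h2r
    have hrx : r ∣ x := by rw [hxuv]; exact dvd_add h1r h2r
    have hrc : r ∣ c := by rw [hcuv]; exact dvd_sub h2r h1r
    have hr19f : r ∣ 19 * f ^ 4 := by rw [← huv]; exact h1r.mul_right v
    have hre : r ∣ f → False := by
      intro hrf
      have hre2 : r ∣ e ^ 2 := by
        have : e ^ 2 = c + 4 * f ^ 2 := by rw [hcdef]; ring
        rw [this]
        exact dvd_add hrc (Dvd.dvd.mul_left (hrf.pow two_ne_zero) 4)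
      exact hr.not_unit (hco.isUnit_of_dvd' (hr.dvd_of_dvd_pow hre2) hrf)
    rcases hr.dvd_mul.mp hr19f with hr19 | hrf4
    · have hassoc : Associated r 19 := hr.associated_of_dvd prime19 hr19
      have h19x : (19 : ℤ) ∣ x := (Associated.dvd_iff_dvd_left hassoc).mp hrx
      have h19c : (19 : ℤ) ∣ c := (Associated.dvd_iff_dvd_left hassoc).mp hrc
      obtain ⟨x1, hx1⟩ := h19x
      obtain ⟨c1, hc1⟩ := h19c
      have h19f : (19 : ℤ) ∣ 4 * f ^ 4 := by
        have h19ne : (19 : ℤ) ≠ 0 := by norm_num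
        have hcc : 19 * (x1 ^ 2 - c1 ^ 2) = 4 * f ^ 4 := by
          apply mul_left_cancel₀ h19ne
          rw [hx1, hc1] at hxc
          linear_combination hxc
        exact ⟨x1 ^ 2 - c1 ^ 2, hcc.symm⟩
      rcases prime19.dvd_mul.mp h19f with h4' | hff
      · norm_num at h4'
      · -- 19 ∣ f, and r ∣ 19 so r ∣ f
        exact hre ((Associated.dvd_iff_dvd_left hassoc).mpr (prime19.dvd_of_dvd_pow hff))
    · exact hre (hr.dvd_of_dvd_pow hrf4)
  obtain ⟨g, h, hg, hh, hgh, hbranch⟩ :=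
    prime_quartic_split prime19 hu0 hv0 hf hcoUV huv
  rcases hbranch with ⟨hug, hvh⟩ | ⟨hug, hvh⟩
  · -- u = 19 g⁴, v = h⁴ : new solution (h, g, e)
    refine ⟨h, g, e, hh, hg, he, Dvd.intro h hgh, ?_⟩
    have : e ^ 2 = c + 4 * f ^ 2 := by rw [hcdef]; ring
    rw [hcuv, hug, hvh, ← hgh] at this
    linear_combination -this
  · -- u = g⁴, v = 19 h⁴ : contradiction mod 8
    exfalso
    have heq2 : e ^ 2 = 19 * h ^ 4 + 4 * g ^ 2 * h ^ 2 - g ^ 4 := by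
      have : e ^ 2 = c + 4 * f ^ 2 := by rw [hcdef]; ring
      rw [hcuv, hug, hvh, ← hgh] at this
      linear_combination this
    have hghe : Even ((g : ZMod 8) * (h : ZMod 8)) := by
      have h8 : ((f : ℤ) : ZMod 8) = (g : ZMod 8) * h := by rw [← hgh]; push_cast; ring
      rw [← h8]; exact even_cast hfe
    have hcast := congrArg (fun n : ℤ => (n : ZMod 8)) heq2
    push_cast at hcast
    exact dec4 _ _ _ (odd_cast hodd) hghe hcast

instance : DecidablePred (Odd : ZMod 2 → Prop) := fun _ => by unfold Odd; infer_instance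
instance : DecidablePred (Even : ZMod 2 → Prop) := fun _ => by unfold Even; infer_instance

lemma dec6 : ∀ a z y : ZMod 2, Odd a → Even z → Even y → a ^ 2 - z ^ 2 ≠ 23 * y ^ 4 := by decide

lemma not_unit_two : ¬ IsUnit (2 : ℤ) := by
  intro hu
  rcases Int.isUnit_iff.mp hu with h | h <;> norm_num at h

set_option maxHeartbeats 2000000 in
lemma key : ∀ n : ℕ, ∀ x y z : ℤ, y.natAbs = n → 0 < x → 0 < y → 0 < z →
    x ^ 4 + 4 * x ^ 2 * y ^ 2 - 19 * y ^ 4 = z ^ 2 → False := by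
  intro n
  induction n using Nat.strong_induction_on with
  | _ n IH =>
  intro x y z hn hx hy hz heq
  rcases Nat.lt_or_ge (Int.gcd x y) 2 with hg | hg
  · -- x, y coprime
    have hgcd : Int.gcd x y = 1 := by
      have h0 : Int.gcd x y ≠ 0 := by
        intro h0
        rw [Int.gcd_eq_zero_iff] at h0
        omega
      omega
    have hcoxy : IsCoprime x y := Int.isCoprime_iff_gcd_eq_one.mpr hgcd
    have prime23 : Prime (23 : ℤ) := by norm_num
    set a : ℤ := x ^ 2 + 2 * y ^ 2 with hadef
    have ha : 0 < a := by positivity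
    have haz : a ^ 2 - z ^ 2 = 23 * y ^ 4 := by rw [hadef, ← heq]; ring
    have hza : z < a := by nlinarith [pow_pos hy 4]
    have hp0 : 0 < a - z := by linarith
    have hq0 : 0 < a + z := by linarith
    have hpq : (a - z) * (a + z) = 23 * y ^ 4 := by linear_combination haz
    have hcoaz : IsCoprime a z := by
      apply int_coprime_of_forall_prime
      intro r hr hra hrz
      have hr23y : r ∣ 23 * y ^ 4 := by
        rw [← haz]; exact dvd_sub (dvd_pow hra two_ne_zero) (dvd_pow hrz two_ne_zero)
      have hry : r ∣ y → False := by
        intro hryd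
        have hrx2 : r ∣ x ^ 2 := by
          have hxa : x ^ 2 = a - 2 * y ^ 2 := by rw [hadef]; ring
          rw [hxa]; exact dvd_sub hra ((hryd.pow two_ne_zero).mul_left 2)
        exact hr.not_unit (hcoxy.isUnit_of_dvd' (hr.dvd_of_dvd_pow hrx2) hryd)
      rcases hr.dvd_mul.mp hr23y with h23 | hy4
      · have hassoc := hr.associated_of_dvd prime23 h23
        have h23a : (23 : ℤ) ∣ a := hassoc.dvd_iff_dvd_left.mp hra
        have h23z : (23 : ℤ) ∣ z := hassoc.dvd_iff_dvd_left.mp hrz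
        obtain ⟨a1, ha1⟩ := h23a
        obtain ⟨z1, hz1'⟩ := h23z
        have h23y : (23 : ℤ) ∣ y ^ 4 := by
          have hcc : 23 * (a1 ^ 2 - z1 ^ 2) = y ^ 4 := by
            apply mul_left_cancel₀ (show (23 : ℤ) ≠ 0 by norm_num)
            rw [ha1, hz1'] at haz
            linear_combination haz
          exact ⟨_, hcc.symm⟩
        have h23yy := prime23.dvd_of_dvd_pow h23y
        have h23x : (23 : ℤ) ∣ x := by
          apply prime23.dvd_of_dvd_pow (n := 2)
          have hxa : x ^ 2 = a - 2 * y ^ 2 := by rw [hadef]; ring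
          rw [hxa]
          exact dvd_sub ⟨a1, ha1⟩ ((h23yy.pow two_ne_zero).mul_left 2)
        exact prime23.not_unit (hcoxy.isUnit_of_dvd' h23x h23yy)
      · exact hry (hr.dvd_of_dvd_pow hy4)
    rcases Int.even_or_odd y with hye | hyo
    · -- y even
      have hxodd : Odd x := by
        rcases Int.even_or_odd x with hxe | hxo
        · exfalso
          obtain ⟨k1, hk1⟩ := hxe
          obtain ⟨k2, hk2⟩ := hye
          exact not_unit_two (hcoxy.isUnit_of_dvd' ⟨k1, by omega⟩ ⟨k2, by omega⟩)
        · exact hxo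
      obtain ⟨m0, hm0⟩ := hye
      set y0 : ℤ := m0 with hy0def
      have hy0 : y = 2 * y0 := by omega
      have hy0p : 0 < y0 := by omega
      obtain ⟨kx, hkx⟩ := hxodd
      have haodd : Odd a := ⟨2 * kx ^ 2 + 2 * kx + 4 * y0 ^ 2, by
        rw [hadef, hkx, hy0]; ring⟩
      have hzodd : Odd z := by
        rcases Int.even_or_odd z with hze | hzo
        · exfalso
          have hcast := congrArg (fun n : ℤ => (n : ZMod 2)) haz
          push_cast at hcast
          exact dec6 _ _ _ (odd_cast haodd) (even_cast hze) (even_cast ⟨y0, by omega⟩) hcast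
        · exact hzo
      obtain ⟨ka, hka⟩ := haodd
      obtain ⟨kz, hkz⟩ := hzodd
      set u : ℤ := ka - kz with hudef
      set v : ℤ := ka + kz + 1 with hvdef
      have hu : a - z = 2 * u := by rw [hudef, hka, hkz]; ring
      have hv : a + z = 2 * v := by rw [hvdef, hka, hkz]; ring
      have hu0 : 0 < u := by linarith
      have hv0 : 0 < v := by linarith
      have hauv : a = u + v := by linarith [hu, hv]
      have hzuv : z = v - u := by linarith [hu, hv]
      have huv : u * v = 23 * (2 * y0 ^ 2) ^ 2 := by
        have h4 : 4 * (u * v) = 4 * (23 * (2 * y0 ^ 2) ^ 2) := by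
          have hpq2 : (2 * u) * (2 * v) = 23 * y ^ 4 := by rw [← hu, ← hv]; exact hpq
          rw [hy0] at hpq2
          linarith [hpq2]
        linarith
      have hcoUV : IsCoprime u v := by
        apply int_coprime_of_forall_prime
        intro r hr h1r h2r
        have hra : r ∣ a := by rw [hauv]; exact dvd_add h1r h2r
        have hrz : r ∣ z := by rw [hzuv]; exact dvd_sub h2r h1r
        exact hr.not_unit (hcoaz.isUnit_of_dvd' hra hrz)
      obtain ⟨s, t, hs, ht, hst, hbr⟩ :=
        prime_sq_split prime23 hu0 hv0 (by positivity) hcoUV huv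
      have hcost : IsCoprime s t := by
        rcases hbr with ⟨h1b, h2b⟩ | ⟨h1b, h2b⟩
        · exact (IsCoprime.of_isCoprime_of_dvd_left
            (IsCoprime.of_isCoprime_of_dvd_right hcoUV ⟨t, by rw [h2b]; ring⟩)
            ⟨23 * s, by rw [h1b]; ring⟩)
        · exact (IsCoprime.of_isCoprime_of_dvd_left
            (IsCoprime.of_isCoprime_of_dvd_right hcoUV ⟨23 * t, by rw [h2b]; ring⟩)
            ⟨s, by rw [h1b]; ring⟩)
      have hx2 : x ^ 2 = u + v - 8 * y0 ^ 2 := by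
        have hxa : x ^ 2 = a - 2 * y ^ 2 := by rw [hadef]; ring
        rw [hxa, hauv, hy0]; ring
      have hparity : (Even s ∧ Odd t) ∨ (Odd s ∧ Even t) := by
        rcases Int.even_or_odd s with hse | hso <;> rcases Int.even_or_odd t with hte | hto
        · exfalso
          obtain ⟨k1, hk1⟩ := hse
          obtain ⟨k2, hk2⟩ := hte
          exact not_unit_two (hcost.isUnit_of_dvd' ⟨k1, by omega⟩ ⟨k2, by omega⟩)
        · exact Or.inl ⟨hse, hto⟩
        · exact Or.inr ⟨hso, hte⟩
        · exfalso
          have hods : Odd (s * t) := hso.mul hto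
          rw [hst] at hods
          obtain ⟨w, hw⟩ := hods
          omega
      rcases hbr with ⟨h1b, h2b⟩ | ⟨h1b, h2b⟩ <;> rcases hparity with ⟨hpe, hpo⟩ | ⟨hpo, hpe⟩
      · -- u = 23 s², v = t², s even : shape II, descend
        obtain ⟨m1, hm1⟩ := hpe
        set s1 : ℤ := m1 with hs1def
        have hs1 : s = 2 * s1 := by omega
        have hs1p : 0 < s1 := by omega
        have hs1t : s1 * t = y0 ^ 2 := by
          have h2c : 2 * (s1 * t) = 2 * y0 ^ 2 := by rw [← hst, hs1]; ring
          linarith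
        have hco1 : IsCoprime s1 t :=
          IsCoprime.of_isCoprime_of_dvd_left hcost ⟨2, by omega⟩
        obtain ⟨F, E, hF, hE, hs1F, htE, hFE⟩ :=
          sq_split hs1p ht (le_of_lt hy0p) hco1 hs1t
        have hEodd : Odd E := by
          rcases Int.even_or_odd E with hEe | hEo
          · exfalso
            obtain ⟨k, hk⟩ := hEe
            exact (Int.not_odd_iff_even.mpr ⟨2 * k ^ 2, by rw [htE, hk]; ring⟩) hpo
          · exact hEo
        have hcoEF : IsCoprime E F :=
          IsCoprime.of_isCoprime_of_dvd_right
            (IsCoprime.of_isCoprime_of_dvd_left hco1.symm ⟨E, by rw [htE]; ring⟩)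
            ⟨F, by rw [hs1F]; ring⟩
        have heqII : x ^ 2 = E ^ 4 - 8 * E ^ 2 * F ^ 2 + 92 * F ^ 4 := by
          rw [hx2, h1b, h2b, hs1, ← hs1t, hs1F, htE]; ring
        obtain ⟨X, Y, Z, hX, hY, hZ, hYF, heqXYZ⟩ :=
          descent_II hx hE hF hcoEF hEodd heqII
        have hYle : Y ≤ F := Int.le_of_dvd hF hYF
        have hFy0 : F ≤ y0 := by
          calc F = F * 1 := by ring
          _ ≤ F * E := mul_le_mul_of_nonneg_left hE (le_of_lt hF)
          _ = y0 := hFE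
        have hYy : Y < y := by linarith
        exact IH Y.natAbs (by omega) X Y Z rfl hX hY hZ heqXYZ
      · -- u = 23 s², v = t², t even : shape I, contradiction
        obtain ⟨m1, hm1⟩ := hpe
        set t1 : ℤ := m1 with ht1def
        have ht1 : t = 2 * t1 := by omega
        have ht1p : 0 < t1 := by omega
        have hst1 : s * t1 = y0 ^ 2 := by
          have h2c : 2 * (s * t1) = 2 * y0 ^ 2 := by rw [← hst, ht1]; ring
          linarith
        have hco1 : IsCoprime s t1 :=
          IsCoprime.of_isCoprime_of_dvd_right hcost ⟨2, by omega⟩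
        obtain ⟨E, F, hE, hF, hsE, ht1F, hEF⟩ :=
          sq_split hs ht1p (le_of_lt hy0p) hco1 hst1
        have hEodd : Odd E := by
          rcases Int.even_or_odd E with hEe | hEo
          · exfalso
            obtain ⟨k, hk⟩ := hEe
            exact (Int.not_odd_iff_even.mpr ⟨2 * k ^ 2, by rw [hsE, hk]; ring⟩) hpo
          · exact hEo
        have heqI : x ^ 2 = 23 * E ^ 4 + 4 * F ^ 4 - 8 * E ^ 2 * F ^ 2 := by
          rw [hx2, h1b, h2b, ht1, ← hst1, hsE, ht1F]; ring
        have hcast := congrArg (fun n : ℤ => (n : ZMod 8)) heqI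
        push_cast at hcast
        exact dec2 _ _ _ (odd_cast hEodd) hcast
      · -- u = s², v = 23 t², s even : shape I, contradiction
        obtain ⟨m1, hm1⟩ := hpe
        set s1 : ℤ := m1 with hs1def
        have hs1 : s = 2 * s1 := by omega
        have hs1p : 0 < s1 := by omega
        have hs1t : s1 * t = y0 ^ 2 := by
          have h2c : 2 * (s1 * t) = 2 * y0 ^ 2 := by rw [← hst, hs1]; ring
          linarith
        have hco1 : IsCoprime s1 t :=
          IsCoprime.of_isCoprime_of_dvd_left hcost ⟨2, by omega⟩
        obtain ⟨F, E, hF, hE, hs1F, htE, hFE⟩ :=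
          sq_split hs1p ht (le_of_lt hy0p) hco1 hs1t
        have hEodd : Odd E := by
          rcases Int.even_or_odd E with hEe | hEo
          · exfalso
            obtain ⟨k, hk⟩ := hEe
            exact (Int.not_odd_iff_even.mpr ⟨2 * k ^ 2, by rw [htE, hk]; ring⟩) hpo
          · exact hEo
        have heqI : x ^ 2 = 23 * E ^ 4 + 4 * F ^ 4 - 8 * E ^ 2 * F ^ 2 := by
          rw [hx2, h1b, h2b, hs1, ← hs1t, hs1F, htE]; ring
        have hcast := congrArg (fun n : ℤ => (n : ZMod 8)) heqI
        push_cast at hcast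
        exact dec2 _ _ _ (odd_cast hEodd) hcast
      · -- u = s², v = 23 t², t even : shape II, descend
        obtain ⟨m1, hm1⟩ := hpe
        set t1 : ℤ := m1 with ht1def
        have ht1 : t = 2 * t1 := by omega
        have ht1p : 0 < t1 := by omega
        have hst1 : s * t1 = y0 ^ 2 := by
          have h2c : 2 * (s * t1) = 2 * y0 ^ 2 := by rw [← hst, ht1]; ring
          linarith
        have hco1 : IsCoprime s t1 :=
          IsCoprime.of_isCoprime_of_dvd_right hcost ⟨2, by omega⟩
        obtain ⟨E, F, hE, hF, hsE, ht1F, hEF⟩ :=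
          sq_split hs ht1p (le_of_lt hy0p) hco1 hst1
        have hEodd : Odd E := by
          rcases Int.even_or_odd E with hEe | hEo
          · exfalso
            obtain ⟨k, hk⟩ := hEe
            exact (Int.not_odd_iff_even.mpr ⟨2 * k ^ 2, by rw [hsE, hk]; ring⟩) hpo
          · exact hEo
        have hcoEF : IsCoprime E F :=
          IsCoprime.of_isCoprime_of_dvd_right
            (IsCoprime.of_isCoprime_of_dvd_left hco1 ⟨E, by rw [hsE]; ring⟩)
            ⟨F, by rw [ht1F]; ring⟩
        have heqII : x ^ 2 = E ^ 4 - 8 * E ^ 2 * F ^ 2 + 92 * F ^ 4 := by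
          rw [hx2, h1b, h2b, ht1, ← hst1, hsE, ht1F]; ring
        obtain ⟨X, Y, Z, hX, hY, hZ, hYF, heqXYZ⟩ :=
          descent_II hx hE hF hcoEF hEodd heqII
        have hYle : Y ≤ F := Int.le_of_dvd hF hYF
        have hFy0 : F ≤ y0 := by
          calc F = F * 1 := by ring
          _ ≤ F * E := mul_le_mul_of_nonneg_left hE (le_of_lt hF)
          _ = y0 := by rw [mul_comm]; exact hEF
        have hYy : Y < y := by linarith
        exact IH Y.natAbs (by omega) X Y Z rfl hX hY hZ heqXYZ
    · -- y odd
      have hcopq : IsCoprime (a - z) (a + z) := by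
        apply int_coprime_of_forall_prime
        intro r hr h1r h2r
        have hr2a : r ∣ 2 * a := by
          have h2a : 2 * a = (a - z) + (a + z) := by ring
          rw [h2a]; exact dvd_add h1r h2r
        have hr2z : r ∣ 2 * z := by
          have h2z : 2 * z = (a + z) - (a - z) := by ring
          rw [h2z]; exact dvd_sub h2r h1r
        have hrodd : ¬ (r ∣ 2) := by
          intro hr2
          have hassoc := hr.associated_of_dvd Int.prime_two hr2
          have h2pq : (2 : ℤ) ∣ (a - z) := hassoc.dvd_iff_dvd_left.mp h1r
          have h2arr : (2 : ℤ) ∣ 23 * y ^ 4 := by rw [← hpq]; exact h2pq.mul_right _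
          have hoddall : Odd (23 * y ^ 4) := Odd.mul ⟨11, by norm_num⟩ (hyo.pow)
          obtain ⟨w, hw⟩ := h2arr
          exact (Int.not_odd_iff_even.mpr ⟨w, by omega⟩) hoddall
        have hra : r ∣ a := (hr.dvd_mul.mp hr2a).resolve_left hrodd
        have hrz : r ∣ z := (hr.dvd_mul.mp hr2z).resolve_left hrodd
        exact hr.not_unit (hcoaz.isUnit_of_dvd' hra hrz)
      obtain ⟨s, t, hs, ht, hst, hbr⟩ :=
        prime_quartic_split prime23 hp0 hq0 hy hcopq hpq
      have hstodd : Odd s ∧ Odd t := by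
        rw [← hst] at hyo
        exact Int.odd_mul.mp hyo
      have hy2 : y ^ 2 = s ^ 2 * t ^ 2 := by rw [← hst]; ring
      rcases hbr with ⟨hb1, hb2⟩ | ⟨hb1, hb2⟩
      · have h2x : 2 * x ^ 2 = 23 * s ^ 4 + t ^ 4 - 4 * s ^ 2 * t ^ 2 := by
          linear_combination hb1 + hb2 - 2 * hadef - 4 * hy2
        have hcast := congrArg (fun n : ℤ => (n : ZMod 8)) h2x
        push_cast at hcast
        exact dec1 _ _ _ (odd_cast hstodd.1) (odd_cast hstodd.2) hcast
      · have h2x : 2 * x ^ 2 = 23 * t ^ 4 + s ^ 4 - 4 * t ^ 2 * s ^ 2 := by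
          linear_combination hb1 + hb2 - 2 * hadef - 4 * hy2
        have hcast := congrArg (fun n : ℤ => (n : ZMod 8)) h2x
        push_cast at hcast
        exact dec1 _ _ _ (odd_cast hstodd.2) (odd_cast hstodd.1) hcast
  · -- gcd ≥ 2 : divide through
    set d : ℤ := (Int.gcd x y : ℤ) with hddef
    have hd2 : (2 : ℤ) ≤ d := by rw [hddef]; exact_mod_cast hg
    obtain ⟨x1, hx1⟩ : d ∣ x := Int.gcd_dvd_left x y
    obtain ⟨y1, hy1⟩ : d ∣ y := Int.gcd_dvd_right x y
    have hd0 : (0 : ℤ) < d := by linarith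
    have hx1p : 0 < x1 := by nlinarith
    have hy1p : 0 < y1 := by nlinarith
    have hK : z ^ 2 = d ^ 4 * (x1 ^ 4 + 4 * x1 ^ 2 * y1 ^ 2 - 19 * y1 ^ 4) := by
      rw [← heq, hx1, hy1]; ring
    have hdvd : (d ^ 2) ^ 2 ∣ z ^ 2 := ⟨x1 ^ 4 + 4 * x1 ^ 2 * y1 ^ 2 - 19 * y1 ^ 4, by rw [hK]; ring⟩
    have hd2z : d ^ 2 ∣ z := (Int.pow_dvd_pow_iff two_ne_zero).mp hdvd
    obtain ⟨z1, hz1⟩ := hd2z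
    have hz1p : 0 < z1 := by nlinarith [pow_pos hd0 2]
    have heq1 : x1 ^ 4 + 4 * x1 ^ 2 * y1 ^ 2 - 19 * y1 ^ 4 = z1 ^ 2 := by
      have h4 : d ^ 4 * (x1 ^ 4 + 4 * x1 ^ 2 * y1 ^ 2 - 19 * y1 ^ 4) = d ^ 4 * z1 ^ 2 := by
        rw [← hK, hz1]; ring
      exact mul_left_cancel₀ (by positivity) h4
    have hy1lt : y1 < y := by nlinarith
    exact IH y1.natAbs (by omega) x1 y1 z1 rfl hx1p hy1p hz1p heq1

theorem stmt8 :
    ¬ ∃ x y z : ℤ, 0 < x ∧ 0 < y ∧ 0 < z ∧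
      x ^ 4 + 4 * x ^ 2 * y ^ 2 - 19 * y ^ 4 = z ^ 2 := by
  rintro ⟨x, y, z, hx, hy, hz, h⟩
  exact key y.natAbs x y z rfl hx hy hz h
end

section
/- The diophantine equation x⁴ + 16x²y² − 3y⁴ = z² has no solution in positive integers x, y, z. -/
lemma odd_pow4_mod16 {n : ℕ} (h : Odd n) : n ^ 4 % 16 = 1 := by
  obtain ⟨m, hlt, hm2, he⟩ : ∃ m, m < 16 ∧ m % 2 = 1 ∧ n ^ 4 % 16 = m ^ 4 % 16 :=
    ⟨n % 16, Nat.mod_lt _ (by norm_num),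
      (Nat.mod_mod_of_dvd n (by norm_num)).trans (Nat.odd_iff.mp h), by rw [Nat.pow_mod]⟩
  rw [he]; interval_cases m <;> simp_all

lemma odd_sq_mod16 {n : ℕ} (h : Odd n) : n ^ 2 % 16 = 1 ∨ n ^ 2 % 16 = 9 := by
  obtain ⟨m, hlt, hm2, he⟩ : ∃ m, m < 16 ∧ m % 2 = 1 ∧ n ^ 2 % 16 = m ^ 2 % 16 :=
    ⟨n % 16, Nat.mod_lt _ (by norm_num),
      (Nat.mod_mod_of_dvd n (by norm_num)).trans (Nat.odd_iff.mp h), by rw [Nat.pow_mod]⟩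
  rw [he]; interval_cases m <;> simp_all

lemma odd_sq_mod8 {n : ℕ} (h : Odd n) : n ^ 2 % 8 = 1 := by
  obtain ⟨m, hlt, hm2, he⟩ : ∃ m, m < 8 ∧ m % 2 = 1 ∧ n ^ 2 % 8 = m ^ 2 % 8 :=
    ⟨n % 8, Nat.mod_lt _ (by norm_num),
      (Nat.mod_mod_of_dvd n (by norm_num)).trans (Nat.odd_iff.mp h), by rw [Nat.pow_mod]⟩
  rw [he]; interval_cases m <;> simp_all

lemma sq_mod8 (n : ℕ) : n ^ 2 % 8 = 0 ∨ n ^ 2 % 8 = 1 ∨ n ^ 2 % 8 = 4 := by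
  obtain ⟨m, hlt, he⟩ : ∃ m, m < 8 ∧ n ^ 2 % 8 = m ^ 2 % 8 :=
    ⟨n % 8, Nat.mod_lt _ (by norm_num), by rw [Nat.pow_mod]⟩
  rw [he]; interval_cases m <;> simp_all

lemma pow4_split {a b t : ℕ} (hco : Nat.Coprime a b) (h : a * b = t ^ 4) :
    ∃ u v, a = u ^ 4 ∧ b = v ^ 4 := by
  have h1 : IsUnit (gcd a b) := by
    rw [show gcd a b = Nat.gcd a b from rfl, hco]; exact isUnit_one
  have h2 : IsUnit (gcd b a) := by
    rw [show gcd b a = Nat.gcd b a from rfl, Nat.gcd_comm, hco]; exact isUnit_one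
  obtain ⟨u, hu⟩ := exists_eq_pow_of_mul_eq_pow h1 h
  obtain ⟨v, hv⟩ := exists_eq_pow_of_mul_eq_pow h2 (mul_comm a b ▸ h)
  exact ⟨u, v, hu, hv⟩

lemma split4 {p : ℕ} (hp : p.Prime) {a b t : ℕ}
    (hco : Nat.Coprime a b) (h : a * b = p * t ^ 4) :
    ∃ u v, u * v = t ∧ ((a = p * u ^ 4 ∧ b = v ^ 4) ∨ (a = u ^ 4 ∧ b = p * v ^ 4)) := by
  have hpab : p ∣ a * b := h ▸ Dvd.intro _ rfl
  have key : ∀ a b : ℕ, Nat.Coprime a b → a * b = p * t ^ 4 → p ∣ a →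
      ∃ u v, u * v = t ∧ a = p * u ^ 4 ∧ b = v ^ 4 := by
    intro a b hco h hpa
    obtain ⟨a0, rfl⟩ := hpa
    have h0 : a0 * b = t ^ 4 := by
      have h' := h
      rw [mul_assoc] at h'
      exact Nat.eq_of_mul_eq_mul_left hp.pos h'
    have hco0 : Nat.Coprime a0 b := Nat.Coprime.coprime_dvd_left (Dvd.intro_left p rfl) hco
    obtain ⟨u, v, hu, hv⟩ := pow4_split hco0 h0
    refine ⟨u, v, ?_, by rw [hu], hv⟩
    have h4 : (u * v) ^ 4 = t ^ 4 := by rw [mul_pow, ← hu, ← hv, h0]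
    exact Nat.pow_left_injective (by norm_num) h4
  rcases (Nat.Prime.dvd_mul hp).mp hpab with hpa | hpb
  · obtain ⟨u, v, huv, h1, h2⟩ := key a b hco h hpa
    exact ⟨u, v, huv, Or.inl ⟨h1, h2⟩⟩
  · obtain ⟨u, v, huv, h1, h2⟩ := key b a hco.symm (by rw [mul_comm]; exact h) hpb
    exact ⟨v, u, by rw [mul_comm]; exact huv, Or.inr ⟨h2, h1⟩⟩

lemma coprime_of {p f C r t : ℕ} (hp : p.Prime) (hp2 : p ≠ 2) (ht : 0 < t)
    (heq : r ^ 2 + p * 2 ^ f * t ^ 4 = C ^ 2)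
    (hodd : ¬ (2 ∣ C) ∨ ¬ (2 ∣ p * 2 ^ f * t ^ 4))
    (key : ∀ q : ℕ, q.Prime → q ≠ 2 → q ∣ C → q ∣ t → False) : Nat.Coprime C r := by
  by_contra hne
  have hM : 0 < p * 2 ^ f * t ^ 4 :=
    Nat.mul_pos (Nat.mul_pos hp.pos (pow_pos (by norm_num) f)) (pow_pos ht 4)
  have hC : 0 < C := by nlinarith [sq_nonneg r]
  set g := Nat.gcd C r with hg
  have hg1 : g ≠ 1 := fun h => hne h
  have hg0 : g ≠ 0 := fun h => by
    have := Nat.eq_zero_of_gcd_eq_zero_left (hg ▸ h)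
    omega
  have hg2 : 2 ≤ g := by omega
  set q := g.minFac with hq
  have hqp : q.Prime := Nat.minFac_prime (by omega)
  have hqC : q ∣ C := (Nat.minFac_dvd g).trans (Nat.gcd_dvd_left C r)
  have hqr : q ∣ r := (Nat.minFac_dvd g).trans (Nat.gcd_dvd_right C r)
  have hq2M : q ^ 2 ∣ p * 2 ^ f * t ^ 4 := by
    have h1 : q ^ 2 ∣ C ^ 2 := pow_dvd_pow_of_dvd hqC 2
    have h2 : q ^ 2 ∣ r ^ 2 := pow_dvd_pow_of_dvd hqr 2
    have h3 : p * 2 ^ f * t ^ 4 = C ^ 2 - r ^ 2 := by omega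
    rw [h3]; exact Nat.dvd_sub h1 h2
  have hqM : q ∣ p * 2 ^ f * t ^ 4 := (dvd_pow_self q (by norm_num)).trans hq2M
  have hqne2 : q ≠ 2 := by
    rcases hodd with h | h
    · intro h2'; exact h (h2' ▸ hqC)
    · intro h2'; exact h (h2' ▸ hqM)
  have hqt : q ∣ t := by
    rcases (Nat.Prime.dvd_mul hqp).mp hqM with h1 | h1
    · rcases (Nat.Prime.dvd_mul hqp).mp h1 with h2 | h2
      · -- q ∣ p so q = p
        have hqep : q = p := (Nat.prime_dvd_prime_iff_eq hqp hp).mp h2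
        have : p * p ∣ p * (2 ^ f * t ^ 4) := by
          rw [← mul_assoc]
          calc p * p = q ^ 2 := by rw [hqep]; ring
          _ ∣ _ := hq2M
        have hpd : p ∣ 2 ^ f * t ^ 4 := (Nat.mul_dvd_mul_iff_left hp.pos).mp this
        rcases (Nat.Prime.dvd_mul hp).mp hpd with h3 | h3
        · exact absurd ((Nat.prime_dvd_prime_iff_eq hp Nat.prime_two).mp
            (hp.dvd_of_dvd_pow h3)) hp2
        · exact hqep ▸ hp.dvd_of_dvd_pow h3
      · exact absurd ((Nat.prime_dvd_prime_iff_eq hqp Nat.prime_two).mp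
          (hqp.dvd_of_dvd_pow h2)) hqne2
    · exact hqp.dvd_of_dvd_pow h1
  exact key q hqp hqne2 hqC hqt

lemma even_split {p F t g h : ℕ} (hp : p.Prime) (ht : Odd t) (hcoGH : Nat.Coprime g h)
    (hgh : g * h = p * 2 ^ F * t ^ 4) (h2g : 2 ∣ g) :
    ∃ u v e o : ℕ, u * v = t ∧ Nat.Coprime u v ∧ Odd u ∧ Odd v ∧
      ((e = p * u ^ 4 ∧ o = v ^ 4) ∨ (e = u ^ 4 ∧ o = p * v ^ 4)) ∧
      g = 2 ^ F * e ∧ h = o := by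
  have h2h : ¬ (2 ∣ h) := by
    intro hd
    have : (2:ℕ) ∣ Nat.gcd g h := Nat.dvd_gcd h2g hd
    rw [hcoGH] at this
    omega
  have hcop2 : Nat.Coprime (2 ^ F) h :=
    Nat.Coprime.pow_left F (Nat.Prime.coprime_iff_not_dvd Nat.prime_two |>.mpr h2h)
  have hdvd : 2 ^ F ∣ g * h := by
    rw [hgh]; exact ⟨p * t ^ 4, by ring⟩
  obtain ⟨e, he⟩ := hcop2.dvd_of_dvd_mul_right hdvd
  have heh : e * h = p * t ^ 4 := by
    have h1 : 2 ^ F * (e * h) = 2 ^ F * (p * t ^ 4) := by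
      rw [← mul_assoc, ← he, hgh]; ring
    exact Nat.eq_of_mul_eq_mul_left (pow_pos (by norm_num) F) h1
  have hcoeh : Nat.Coprime e h := hcoGH.coprime_dvd_left ⟨2 ^ F, by rw [he, mul_comm]⟩
  obtain ⟨u, v, huv, hcase⟩ := split4 hp hcoeh heh
  have hodduv : Odd u ∧ Odd v := Nat.odd_mul.mp (huv ▸ ht)
  have hcouv : Nat.Coprime u v := by
    have hu : u ∣ e := by
      have h4 : u ^ 4 ∣ e := by
        rcases hcase with ⟨h1, _⟩ | ⟨h1, _⟩
        · exact h1 ▸ dvd_mul_left _ p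
        · exact h1 ▸ dvd_rfl
      exact (dvd_pow_self u (by norm_num)).trans h4
    have hv : v ∣ h := by
      have h4 : v ^ 4 ∣ h := by
        rcases hcase with ⟨_, h1⟩ | ⟨_, h1⟩
        · exact h1 ▸ dvd_rfl
        · exact h1 ▸ dvd_mul_left _ p
      exact (dvd_pow_self v (by norm_num)).trans h4
    have hd : Nat.gcd u v ∣ Nat.gcd e h :=
      Nat.dvd_gcd ((Nat.gcd_dvd_left u v).trans hu) ((Nat.gcd_dvd_right u v).trans hv)
    exact Nat.dvd_one.mp (hcoeh ▸ hd)
  exact ⟨u, v, e, h, huv, hcouv, hodduv.1, hodduv.2, hcase, he, rfl⟩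

lemma descent_split {p E t C r : ℕ} (hp : p.Prime) (hp2 : p ≠ 2) (hE : 3 ≤ E) (ht : Odd t)
    (hC : Odd C) (hco : Nat.Coprime C r) (heq : r ^ 2 + p * 2 ^ E * t ^ 4 = C ^ 2) :
    ∃ u v e o : ℕ, u * v = t ∧ Nat.Coprime u v ∧ Odd u ∧ Odd v ∧
      ((e = p * u ^ 4 ∧ o = v ^ 4) ∨ (e = u ^ 4 ∧ o = p * v ^ 4)) ∧
      C = 2 ^ (E - 2) * e + o ∧ (o = 2 ^ (E - 2) * e + r ∨ 2 ^ (E - 2) * e = o + r) := by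
  have ht0 : 0 < t := ht.pos
  have hM : 0 < p * 2 ^ E * t ^ 4 :=
    Nat.mul_pos (Nat.mul_pos hp.pos (pow_pos (by norm_num) E)) (pow_pos ht0 4)
  have hrC : r < C := by
    by_contra hc
    have : C ^ 2 ≤ r ^ 2 := Nat.pow_le_pow_left (by omega) 2
    omega
  have hC2 : C % 2 = 1 := Nat.odd_iff.mp hC
  have hMe : (p * 2 ^ E * t ^ 4) % 2 = 0 := by
    obtain ⟨k, hk⟩ : (2:ℕ) ∣ 2 ^ E := dvd_pow_self 2 (by omega : E ≠ 0)
    have h2 : p * 2 ^ E * t ^ 4 = 2 * (p * k * t ^ 4) := by rw [hk]; ring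
    omega
  have hC2sq : C ^ 2 % 2 = 1 := by
    have := Nat.pow_mod C 2 2
    rw [hC2] at this
    simpa using this
  have hr2 : r ^ 2 % 2 = 1 := by omega
  have hrodd : r % 2 = 1 := by
    have hpm := Nat.pow_mod r 2 2
    have : r % 2 = 0 ∨ r % 2 = 1 := by omega
    rcases this with h1 | h1 <;> rw [h1] at hpm <;> simp at hpm <;> omega
  set g := (C - r) / 2 with hgdef
  set h := (C + r) / 2 with hhdef
  have hg : C - r = 2 * g := by omega
  have hh : C + r = 2 * h := by omega
  have hgh : g + h = C := by omega
  have hrh : h = g + r := by omega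
  have hprod : p * 2 ^ E * t ^ 4 = 4 * (g * h) := by
    have e1 : C ^ 2 = 4 * (g * h) + r ^ 2 := by
      rw [show C = 2 * g + r by omega, hrh]; ring
    omega
  have hE2 : (2:ℕ) ^ E = 4 * 2 ^ (E - 2) := by
    calc (2:ℕ) ^ E = 2 ^ (E - 2 + 2) := by rw [show E - 2 + 2 = E by omega]
      _ = 4 * 2 ^ (E - 2) := by rw [pow_add]; ring
  have hgh2 : g * h = p * 2 ^ (E - 2) * t ^ 4 := by
    have h4 : 4 * (g * h) = 4 * (p * 2 ^ (E - 2) * t ^ 4) := by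
      rw [← hprod, hE2]; ring
    omega
  have hcoGH : Nat.Coprime g h := by
    have hdC : Nat.gcd g h ∣ C := hgh ▸ Nat.dvd_add (Nat.gcd_dvd_left g h) (Nat.gcd_dvd_right g h)
    have hdr : Nat.gcd g h ∣ r := by
      have : r = h - g := by omega
      rw [this]
      exact Nat.dvd_sub (Nat.gcd_dvd_right g h) (Nat.gcd_dvd_left g h)
    exact Nat.dvd_one.mp (hco ▸ Nat.dvd_gcd hdC hdr)
  have h2gh : (2:ℕ) ∣ g * h := by
    rw [hgh2]
    exact Dvd.dvd.mul_right
      (Dvd.dvd.mul_left (dvd_pow_self 2 (by omega : E - 2 ≠ 0)) p) _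
  rcases (Nat.Prime.dvd_mul Nat.prime_two).mp h2gh with h2g | h2h
  · obtain ⟨u, v, e, o, huv, hcouv, hou, hov, hcase, hge, hho⟩ :=
      even_split hp ht hcoGH hgh2 h2g
    exact ⟨u, v, e, o, huv, hcouv, hou, hov, hcase, by omega, Or.inl (by omega)⟩
  · obtain ⟨u, v, e, o, huv, hcouv, hou, hov, hcase, hge, hho⟩ :=
      even_split hp ht hcoGH.symm (by rw [mul_comm]; exact hgh2) h2h
    exact ⟨u, v, e, o, huv, hcouv, hou, hov, hcase, by omega, Or.inr (by omega)⟩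

lemma base3 {a t r : ℕ} (ht : Odd t) (hco : Nat.Coprime a t) :
    r ^ 2 + 67 * 2 ^ (2 * 3 - 6) * t ^ 4 ≠ (a ^ 2 + 2 ^ 3 * t ^ 2) ^ 2 := by
  intro heq
  have h67 : Nat.Prime 67 := by norm_num
  have ht0 : 0 < t := ht.pos
  have hCr : Nat.Coprime (a ^ 2 + 2 ^ 3 * t ^ 2) r := by
    refine coprime_of h67 (by norm_num) ht0 heq ?_ ?_
    · right
      have h4 : t ^ 4 % 2 = 1 := Nat.odd_iff.mp (ht.pow)
      norm_num
      omega
    · intro q hq hq2 hqC hqt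
      have h1 : q ∣ 2 ^ 3 * t ^ 2 := Dvd.dvd.mul_left (Dvd.dvd.pow hqt (by norm_num)) _
      have h2 : q ∣ a ^ 2 := by
        have h3 : a ^ 2 = a ^ 2 + 2 ^ 3 * t ^ 2 - 2 ^ 3 * t ^ 2 := by omega
        rw [h3]
        exact Nat.dvd_sub hqC h1
      have h4 : q ∣ Nat.gcd a t := Nat.dvd_gcd (hq.dvd_of_dvd_pow h2) hqt
      rw [hco] at h4
      exact Nat.Prime.one_lt hq |>.ne' (Nat.dvd_one.mp h4)
  obtain ⟨C, hCdef⟩ : ∃ C, C = a ^ 2 + 2 ^ 3 * t ^ 2 := ⟨_, rfl⟩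
  rw [← hCdef] at heq hCr
  have hMe : 67 * 2 ^ (2 * 3 - 6) * t ^ 4 = 67 * t ^ 4 := by norm_num
  rw [hMe] at heq
  have hMo : (67 * t ^ 4) % 2 = 1 := by
    have h4 : t ^ 4 % 2 = 1 := Nat.odd_iff.mp ht.pow
    omega
  have hrC : r < C := by
    by_contra hc
    have h1 : C ^ 2 ≤ r ^ 2 := Nat.pow_le_pow_left (by omega) 2
    have h2 : 0 < 67 * t ^ 4 := by positivity
    omega
  obtain ⟨d1, hd1⟩ : ∃ d1, C = r + d1 := ⟨C - r, by omega⟩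
  have hprod : d1 * (2 * r + d1) = 67 * t ^ 4 := by
    have e1 : (r + d1) ^ 2 = d1 * (2 * r + d1) + r ^ 2 := by ring
    rw [hd1] at heq
    omega
  have hd1odd : d1 % 2 = 1 := by
    have h1 : d1 ∣ 67 * t ^ 4 := ⟨2 * r + d1, hprod.symm⟩
    rcases Nat.even_or_odd d1 with he | ho
    · obtain ⟨k, hk⟩ := he
      obtain ⟨m, hm⟩ : (2:ℕ) ∣ 67 * t ^ 4 := dvd_trans ⟨k, by omega⟩ h1
      omega
    · exact Nat.odd_iff.mp ho
  have hcop : Nat.Coprime d1 (2 * r + d1) := by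
    set g := Nat.gcd d1 (2 * r + d1) with hg
    have hgd : g ∣ d1 := Nat.gcd_dvd_left _ _
    have hgodd : ¬ (2 ∣ g) := fun h2 => by
      obtain ⟨k, hk⟩ := h2.trans hgd
      omega
    have hg2r : g ∣ 2 * r := by
      have h1 : 2 * r = 2 * r + d1 - d1 := by omega
      rw [h1]
      exact Nat.dvd_sub (Nat.gcd_dvd_right _ _) hgd
    have hgr : g ∣ r := (Nat.Coprime.dvd_of_dvd_mul_left
      (Nat.Prime.coprime_iff_not_dvd Nat.prime_two |>.mpr hgodd).symm hg2r)
    have hgC : g ∣ C := hd1 ▸ Nat.dvd_add hgr hgd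
    exact Nat.dvd_one.mp (hCr ▸ Nat.dvd_gcd hgC hgr)
  obtain ⟨u, v, huv, hcase⟩ := split4 h67 hcop hprod
  obtain ⟨hou, hov⟩ : Odd u ∧ Odd v := Nat.odd_mul.mp (huv ▸ ht)
  have hu16 : u ^ 4 % 16 = 1 := odd_pow4_mod16 hou
  have hv16 : v ^ 4 % 16 = 1 := odd_pow4_mod16 hov
  have ha8 := sq_mod8 a
  have hC8 : C = a ^ 2 + 8 * t ^ 2 := by rw [hCdef]; norm_num
  rcases hcase with ⟨h1, h2⟩ | ⟨h1, h2⟩ <;> omega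

lemma key_of {a t : ℕ} (hco : Nat.Coprime a t) (j : ℕ) :
    ∀ q : ℕ, q.Prime → q ≠ 2 → q ∣ a ^ 2 + 2 ^ j * t ^ 2 → q ∣ t → False := by
  intro q hq hq2 hqC hqt
  have h1 : q ∣ 2 ^ j * t ^ 2 := Dvd.dvd.mul_left (Dvd.dvd.pow hqt (by norm_num)) _
  have h2 : q ∣ a ^ 2 := by
    have h3 : a ^ 2 = a ^ 2 + 2 ^ j * t ^ 2 - 2 ^ j * t ^ 2 := by omega
    rw [h3]
    exact Nat.dvd_sub hqC h1
  have h4 : q ∣ Nat.gcd a t := Nat.dvd_gcd (hq.dvd_of_dvd_pow h2) hqt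
  rw [hco] at h4
  exact Nat.Prime.one_lt hq |>.ne' (Nat.dvd_one.mp h4)

lemma odd_C {a t : ℕ} (ha : Odd a) (j : ℕ) (hj : 1 ≤ j) : Odd (a ^ 2 + 2 ^ j * t ^ 2) := by
  have h1 : a ^ 2 % 2 = 1 := Nat.odd_iff.mp ha.pow
  have h2 : (2:ℕ) ∣ 2 ^ j := dvd_pow_self 2 (by omega : j ≠ 0)
  obtain ⟨k, hk⟩ := h2
  have h3 : 2 ^ j * t ^ 2 = 2 * (k * t ^ 2) := by rw [hk]; ring
  rw [Nat.odd_iff]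
  omega

lemma base5 {a t r : ℕ} (ht : Odd t) (ha : Odd a) (hco : Nat.Coprime a t) :
    r ^ 2 + 67 * 2 ^ (2 * 5 - 6) * t ^ 4 ≠ (a ^ 2 + 2 ^ 5 * t ^ 2) ^ 2 := by
  intro heq
  have h67 : Nat.Prime 67 := by norm_num
  have ht0 : 0 < t := ht.pos
  have hCodd : Odd (a ^ 2 + 2 ^ 5 * t ^ 2) := odd_C ha 5 (by norm_num)
  have hCr : Nat.Coprime (a ^ 2 + 2 ^ 5 * t ^ 2) r :=
    coprime_of h67 (by norm_num) ht0 heq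
      (Or.inl (by simpa [Nat.two_dvd_ne_zero] using Nat.odd_iff.mp hCodd)) (key_of hco 5)
  obtain ⟨u, v, e, o, huv, hcouv, hou, hov, hcase, hCeq, hr⟩ :=
    descent_split h67 (by norm_num) (by norm_num) ht hCodd hCr heq
  have hp4 : (2:ℕ) ^ (2 * 5 - 6 - 2) = 4 := by norm_num
  have h32 : (2:ℕ) ^ 5 = 32 := by norm_num
  rw [hp4, h32] at hCeq
  have hu16 : u ^ 4 % 16 = 1 := odd_pow4_mod16 hou
  have hv16 : v ^ 4 % 16 = 1 := odd_pow4_mod16 hov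
  have ha8 : a ^ 2 % 8 = 1 := odd_sq_mod8 ha
  rcases hcase with ⟨h1, h2⟩ | ⟨h1, h2⟩ <;> omega

lemma step7 {J a t r : ℕ} (ht : Odd t) (ha : Odd a) (hco : Nat.Coprime a t)
    (IH : ∀ a' t' r' : ℕ, Odd a' → Odd t' → Nat.Coprime a' t' →
      r' ^ 2 + 67 * 2 ^ (2 * (J + 5) - 6) * t' ^ 4 ≠ (a' ^ 2 + 2 ^ (J + 5) * t' ^ 2) ^ 2) :
    r ^ 2 + 67 * 2 ^ (2 * (J + 7) - 6) * t ^ 4 ≠ (a ^ 2 + 2 ^ (J + 7) * t ^ 2) ^ 2 := by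
  intro heq
  have h67 : Nat.Prime 67 := by norm_num
  have ht0 : 0 < t := ht.pos
  have hCodd : Odd (a ^ 2 + 2 ^ (J + 7) * t ^ 2) := odd_C ha (J + 7) (by omega)
  have hCr : Nat.Coprime (a ^ 2 + 2 ^ (J + 7) * t ^ 2) r :=
    coprime_of h67 (by norm_num) ht0 heq
      (Or.inl (by simpa [Nat.two_dvd_ne_zero] using Nat.odd_iff.mp hCodd)) (key_of hco (J + 7))
  obtain ⟨u, v, e, o, huv, hcouv, hou, hov, hcase, hCeq, -⟩ :=
    descent_split h67 (by norm_num) (by omega) ht hCodd hCr heq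
  obtain ⟨W, hW⟩ : ∃ W, (2:ℕ) ^ J = W := ⟨_, rfl⟩
  have hpA : (2:ℕ) ^ (J + 7) = 128 * W := by rw [pow_add, hW]; ring
  have hpB : (2:ℕ) ^ (2 * (J + 7) - 6 - 2) = 64 * W ^ 2 := by
    rw [show 2 * (J + 7) - 6 - 2 = J * 2 + 6 by omega, pow_add, pow_mul, hW]; ring
  rw [hpA, hpB] at hCeq
  have ha16 := odd_sq_mod16 ha
  have hu16 : u ^ 4 % 16 = 1 := odd_pow4_mod16 hou
  have hv16 : v ^ 4 % 16 = 1 := odd_pow4_mod16 hov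
  have gA : 128 * W * t ^ 2 = 16 * (8 * (W * t ^ 2)) := by ring
  have gB : 64 * W ^ 2 * e = 16 * (4 * (W ^ 2 * e)) := by ring
  rcases hcase with ⟨he, ho⟩ | ⟨he, ho⟩
  swap
  · -- o = 67 v^4 : impossible mod 16
    omega
  -- now e = 67 u^4, o = v^4
  rw [he, ho] at hCeq
  -- hCeq : a^2 + 128*W*t^2 = 64*W^2*(67*u^4) + v^4
  have hNat : a ^ 2 + 128 * W * (u * v) ^ 2 = 64 * W ^ 2 * (67 * u ^ 4) + v ^ 4 := by
    rw [huv]; exact hCeq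
  have hstarZ : (a:ℤ) ^ 2 + 128 * (W:ℤ) * (u:ℤ) ^ 2 * (v:ℤ) ^ 2
      = (v:ℤ) ^ 4 + 4288 * (W:ℤ) ^ 2 * (u:ℤ) ^ 4 := by
    have := hNat
    zify at this
    linear_combination this
  -- construct b = |v^2 - 64 W u^2|
  obtain ⟨b, hb⟩ : ∃ b, (v ^ 2 = b + 64 * W * u ^ 2 ∨ 64 * W * u ^ 2 = b + v ^ 2) := by
    rcases le_total (64 * W * u ^ 2) (v ^ 2) with h1 | h1
    · exact ⟨v ^ 2 - 64 * W * u ^ 2, Or.inl (by omega)⟩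
    · exact ⟨64 * W * u ^ 2 - v ^ 2, Or.inr (by omega)⟩
  have haBZ : (a:ℤ) ^ 2 = (b:ℤ) ^ 2 + 192 * (W:ℤ) ^ 2 * (u:ℤ) ^ 4 := by
    rcases hb with hb | hb
    · have hbZ : (v:ℤ) ^ 2 = (b:ℤ) + 64 * (W:ℤ) * (u:ℤ) ^ 2 := by exact_mod_cast hb
      linear_combination hstarZ + ((v:ℤ) ^ 2 + (b:ℤ) - 64 * (W:ℤ) * (u:ℤ) ^ 2) * hbZ
    · have hbZ : 64 * (W:ℤ) * (u:ℤ) ^ 2 = (b:ℤ) + (v:ℤ) ^ 2 := by exact_mod_cast hb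
      linear_combination hstarZ + ((b:ℤ) + 64 * (W:ℤ) * (u:ℤ) ^ 2 - (v:ℤ) ^ 2) * hbZ
  have hpD : (2:ℕ) ^ (2 * J + 6) = 64 * W ^ 2 := by
    rw [show 2 * J + 6 = J * 2 + 6 by omega, pow_add, pow_mul, hW]; ring
  have heq2 : b ^ 2 + 3 * 2 ^ (2 * J + 6) * u ^ 4 = a ^ 2 := by
    rw [hpD]; zify; linear_combination - haBZ
  have hut : u ∣ t := ⟨v, huv.symm⟩
  have hab : Nat.Coprime a b := by
    refine coprime_of (by norm_num : Nat.Prime 3) (by norm_num) hou.pos heq2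
      (Or.inl (by simpa [Nat.two_dvd_ne_zero] using Nat.odd_iff.mp ha)) ?_
    intro q hq hq2 hqa hqu
    have h4 : q ∣ Nat.gcd a t := Nat.dvd_gcd hqa (hqu.trans hut)
    rw [hco] at h4
    exact Nat.Prime.one_lt hq |>.ne' (Nat.dvd_one.mp h4)
  obtain ⟨u', v', e', o', huv', hcouv', hou', hov', hcase', -, hb2⟩ :=
    descent_split (by norm_num : Nat.Prime 3) (by norm_num) (by omega) hou ha hab heq2
  have hpE : (2:ℕ) ^ (2 * J + 6 - 2) = 16 * W ^ 2 := by
    rw [show 2 * J + 6 - 2 = J * 2 + 4 by omega, pow_add, pow_mul, hW]; ring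
  rw [hpE] at hb2
  have hu'16 : u' ^ 4 % 16 = 1 := odd_pow4_mod16 hou'
  have hv'16 : v' ^ 4 % 16 = 1 := odd_pow4_mod16 hov'
  have hv216 := odd_sq_mod16 hov
  -- rewrite u = u' * v' in hb
  rw [← huv'] at hb
  have gC : 64 * W * (u' * v') ^ 2 = 16 * (4 * (W * (u' * v') ^ 2)) := by ring
  have gD : 16 * W ^ 2 * e' = 16 * (W ^ 2 * e') := by ring
  -- apply IH with a' = v', t' = u', r' = v
  refine IH v' u' v hov' hou' hcouv'.symm ?_
  have hpF : (2:ℕ) ^ (2 * (J + 5) - 6) = 16 * W ^ 2 := by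
    rw [show 2 * (J + 5) - 6 = J * 2 + 4 by omega, pow_add, pow_mul, hW]; ring
  have hpG : (2:ℕ) ^ (J + 5) = 32 * W := by rw [pow_add, hW]; ring
  rw [hpF, hpG]
  rcases hcase' with ⟨he', ho'⟩ | ⟨he', ho'⟩
  · -- e' = 3 u'^4, o' = v'^4 : the surviving cases
    rw [he', ho'] at hb2
    have gE : 16 * W ^ 2 * (3 * u' ^ 4) = 16 * (3 * (W ^ 2 * u' ^ 4)) := by ring
    rcases hb2 with h2 | h2 <;> rcases hb with h1 | h1
    · -- v'^4 = 16W^2*3u'^4 + b  and  v^2 = b + 64W(u'v')^2 : goal case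
      zify at h1 h2 ⊢
      linear_combination h1 - h2
    · -- dead: mod 16
      exfalso; omega
    · -- dead: mod 16
      exfalso; omega
    · -- 16W^2*3u'^4 = v'^4 + b  and 64W(u'v')^2 = b + v^2 : goal case
      zify at h1 h2 ⊢
      linear_combination h2 - h1
  · -- o' = 3 v'^4 : dead mod 16
    rw [he', ho'] at hb2
    have gF : 16 * W ^ 2 * u' ^ 4 = 16 * (W ^ 2 * u' ^ 4) := by ring
    exfalso
    rcases hb2 with h2 | h2 <;> rcases hb with h1 | h1 <;> omega

lemma no_sol : ∀ j a t r : ℕ, Odd j → 3 ≤ j → Odd t → (j = 3 ∨ Odd a) → Nat.Coprime a t →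
    r ^ 2 + 67 * 2 ^ (2 * j - 6) * t ^ 4 ≠ (a ^ 2 + 2 ^ j * t ^ 2) ^ 2 := by
  intro j
  induction j using Nat.strong_induction_on with
  | _ j IH =>
  intro a t r hj hj3 ht hja hco
  have hj2 : j % 2 = 1 := Nat.odd_iff.mp hj
  have hcases : j = 3 ∨ j = 5 ∨ ∃ J, j = J + 7 := by
    rcases Nat.lt_or_ge j 7 with h | h
    · omega
    · exact Or.inr (Or.inr ⟨j - 7, by omega⟩)
  rcases hcases with rfl | rfl | ⟨J, rfl⟩
  · exact base3 ht hco
  · have ha : Odd a := hja.resolve_left (by omega)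
    exact base5 ht ha hco
  · have ha : Odd a := hja.resolve_left (by omega)
    refine step7 ht ha hco ?_
    intro a' t' r' ha' ht' hco'
    have hodd5 : Odd (J + 5) := by
      rw [Nat.odd_iff] at *; omega
    exact IH (J + 5) (by omega) a' t' r' hodd5 (by omega) ht' (Or.inr ha') hco'

lemma entry (x y z : ℕ) (hx : 0 < x) (hy : 0 < y)
    (h : z ^ 2 + 67 * y ^ 4 = (x ^ 2 + 8 * y ^ 2) ^ 2) : False := by
  -- reduce to coprime case
  obtain ⟨x', hx'⟩ : Nat.gcd x y ∣ x := Nat.gcd_dvd_left x y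
  obtain ⟨y', hy'⟩ : Nat.gcd x y ∣ y := Nat.gcd_dvd_right x y
  set d := Nat.gcd x y with hd
  have hd0 : 0 < d := Nat.gcd_pos_of_pos_left _ hx
  have hco : Nat.Coprime x' y' := by
    have h1 : d * Nat.gcd x' y' = d := by
      conv_rhs => rw [hd, hx', hy']
      rw [Nat.gcd_mul_left]
    exact Nat.eq_of_mul_eq_mul_left hd0 (h1.trans (mul_one d).symm)
  have hx'0 : 0 < x' := by
    rcases Nat.eq_zero_or_pos x' with h0 | h0
    · rw [h0, mul_zero] at hx'; omega
    · exact h0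
  have hy'0 : 0 < y' := by
    rcases Nat.eq_zero_or_pos y' with h0 | h0
    · rw [h0, mul_zero] at hy'; omega
    · exact h0
  -- d^4 divides z^2
  have hd4z : d ^ 4 ∣ z ^ 2 := by
    have h1 : d ^ 4 ∣ (x ^ 2 + 8 * y ^ 2) ^ 2 := by
      rw [hx', hy']
      exact ⟨((x' ^ 2 + 8 * y' ^ 2)) ^ 2, by ring⟩
    have h2 : d ^ 4 ∣ 67 * y ^ 4 := by
      rw [hy']
      exact ⟨67 * y' ^ 4, by ring⟩
    have h3 : z ^ 2 = (x ^ 2 + 8 * y ^ 2) ^ 2 - 67 * y ^ 4 := by omega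
    rw [h3]
    exact Nat.dvd_sub h1 h2
  have hd2z : d ^ 2 ∣ z := by
    rw [← Nat.pow_dvd_pow_iff (two_ne_zero)]
    have : (d ^ 2) ^ 2 = d ^ 4 := by ring
    rwa [this]
  obtain ⟨z', hz'⟩ := hd2z
  have h' : z' ^ 2 + 67 * y' ^ 4 = (x' ^ 2 + 8 * y' ^ 2) ^ 2 := by
    have hmain : d ^ 4 * (z' ^ 2 + 67 * y' ^ 4) = d ^ 4 * ((x' ^ 2 + 8 * y' ^ 2) ^ 2) := by
      calc d ^ 4 * (z' ^ 2 + 67 * y' ^ 4) = (d ^ 2 * z') ^ 2 + 67 * (d * y') ^ 4 := by ring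
        _ = (( d * x') ^ 2 + 8 * (d * y') ^ 2) ^ 2 := by rw [← hz', ← hx', ← hy']; exact h
        _ = d ^ 4 * ((x' ^ 2 + 8 * y' ^ 2) ^ 2) := by ring
    exact Nat.eq_of_mul_eq_mul_left (by positivity) hmain
  -- extract 2-adic part of y'
  obtain ⟨k, m, hm, hym⟩ := Nat.exists_eq_two_pow_mul_odd (Nat.pos_iff_ne_zero.mp hy'0)
  have hja : 2 * k + 3 = 3 ∨ Odd x' := by
    rcases Nat.eq_zero_or_pos k with h0 | h0
    · left; omega
    · right
      rcases Nat.even_or_odd x' with he | ho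
      · exfalso
        have h2y : 2 ∣ y' := by
          rw [hym]
          exact Dvd.dvd.mul_right (dvd_pow_self 2 (by omega)) m
        have h2x : 2 ∣ x' := he.two_dvd
        have : (2:ℕ) ∣ Nat.gcd x' y' := Nat.dvd_gcd h2x h2y
        rw [hco] at this
        omega
      · exact ho
  have hcom : Nat.Coprime x' m := Nat.Coprime.coprime_dvd_right ⟨2 ^ k, by rw [hym]; ring⟩ hco
  refine no_sol (2 * k + 3) x' m z' (by rw [Nat.odd_iff]; omega) (by omega) hm hja hcom ?_
  have e1 : 67 * 2 ^ (2 * (2 * k + 3) - 6) * m ^ 4 = 67 * (2 ^ k * m) ^ 4 := by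
    rw [show 2 * (2 * k + 3) - 6 = k * 4 by omega, pow_mul]; ring
  have e2 : 2 ^ (2 * k + 3) * m ^ 2 = 8 * (2 ^ k * m) ^ 2 := by
    rw [show 2 * k + 3 = k * 2 + 3 by omega, pow_add, pow_mul]; ring
  rw [e1, e2, ← hym]
  exact h'

theorem stmt9 :
    ¬ ∃ x y z : ℤ, 0 < x ∧ 0 < y ∧ 0 < z ∧
      x ^ 4 + 16 * x ^ 2 * y ^ 2 - 3 * y ^ 4 = z ^ 2 := by
  rintro ⟨x, y, z, hx, hy, hz, heq⟩
  have hZ : z ^ 2 + 67 * y ^ 4 = (x ^ 2 + 8 * y ^ 2) ^ 2 := by linear_combination -heq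
  have hxt : ((x.toNat : ℤ)) = x := Int.toNat_of_nonneg hx.le
  have hyt : ((y.toNat : ℤ)) = y := Int.toNat_of_nonneg hy.le
  have hzt : ((z.toNat : ℤ)) = z := Int.toNat_of_nonneg hz.le
  refine entry x.toNat y.toNat z.toNat (by omega) (by omega) ?_
  have : ((z.toNat : ℤ)) ^ 2 + 67 * (y.toNat : ℤ) ^ 4
      = ((x.toNat : ℤ) ^ 2 + 8 * (y.toNat : ℤ) ^ 2) ^ 2 := by
    rw [hxt, hyt, hzt]; exact hZ
  exact_mod_cast this
end
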